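/- arXiv:1804.03590 — 5 statements merged into one kernel-verified Lean document; each statement's English description precedes it below -/
import Mathlib

section
/- Let Z be a set of nine points in the complex projective plane such that every line meeting Z in at least two points contains exactly three points of Z. Then Z admits exactly twelve 3-rich lines, i.e., exactly twelve lines containing exactly three points of Z. -/
open MvPolynomial

noncomputable section

abbrev P2 := Projectivization ℂ (Fin 3 → ℂ)

/-- A projective line in `P2`, given as the zero set of a nonzero linear form. -/
def IsLine (S : Set P2) : Prop :=
  ∃ f : (Fin 3 → ℂ) →ₗ[ℂ] ℂ, f ≠ 0 ∧ S = {p : P2 | f p.rep = 0}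

/-- Three points of `P2` are collinear if some line contains all of them. -/
def Collinear3 (p q r : P2) : Prop :=
  ∃ S : Set P2, IsLine S ∧ p ∈ S ∧ q ∈ S ∧ r ∈ S

/-- A point of `P2` from homogeneous coordinates. -/
def pt (v : Fin 3 → ℂ) (h : v ≠ 0) : P2 := Projectivization.mk ℂ v h

/-- Two sets of points of `P2` are projectively equivalent if a linear automorphism
of `ℂ³` carries one onto the other. -/
def ProjEquiv (A B : Set P2) : Prop :=
  ∃ g : (Fin 3 → ℂ) ≃ₗ[ℂ] (Fin 3 → ℂ),
    B = Projectivization.map (g : (Fin 3 → ℂ) →ₗ[ℂ] (Fin 3 → ℂ)) g.injective '' A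

open Matrix

/-- The linear form cutting out the line through two points (given by coordinates `v`, `w`). -/
def lform (v w : Fin 3 → ℂ) : (Fin 3 → ℂ) →ₗ[ℂ] ℂ where
  toFun u := crossProduct v w ⬝ᵥ u
  map_add' x y := dotProduct_add _ x y
  map_smul' c x := by simp [dotProduct_smul]

/-- The line through `p` and `q` in `P2`. -/
def lineThrough (p q : P2) : Set P2 := {x : P2 | lform p.rep q.rep x.rep = 0}

lemma rep_li {p q : P2} (h : p ≠ q) : LinearIndependent ℂ ![p.rep, q.rep] := by
  rw [linearIndependent_fin2]
  refine ⟨by simpa using q.rep_nonzero, fun a ha => ?_⟩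
  simp only [Matrix.cons_val_one, Matrix.head_cons, Matrix.cons_val_zero] at ha
  apply h
  rw [← p.mk_rep, ← q.mk_rep]
  rw [Projectivization.mk_eq_mk_iff' ℂ p.rep q.rep p.rep_nonzero q.rep_nonzero]
  exact ⟨a, ha⟩

lemma lform_ne_zero {p q : P2} (h : p ≠ q) : lform p.rep q.rep ≠ 0 := by
  have hc : crossProduct p.rep q.rep ≠ 0 :=
    crossProduct_ne_zero_iff_linearIndependent.mpr (rep_li h)
  intro hf
  apply hc
  funext i
  have h := DFunLike.congr_fun hf (Pi.single i 1)
  simp only [lform, LinearMap.coe_mk, AddHom.coe_mk, dotProduct_single, mul_one,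
    LinearMap.zero_apply] at h
  exact h

lemma isLine_lineThrough {p q : P2} (h : p ≠ q) : IsLine (lineThrough p q) :=
  ⟨lform p.rep q.rep, lform_ne_zero h, rfl⟩

lemma left_mem_lineThrough (p q : P2) : p ∈ lineThrough p q := by
  show lform p.rep q.rep p.rep = 0
  simp only [lform, LinearMap.coe_mk, AddHom.coe_mk]
  rw [dotProduct_comm]
  exact dot_self_cross _ _

lemma right_mem_lineThrough (p q : P2) : q ∈ lineThrough p q := by
  show lform p.rep q.rep q.rep = 0
  simp only [lform, LinearMap.coe_mk, AddHom.coe_mk]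
  rw [dotProduct_comm]
  exact dot_cross_self _ _

/-- A line containing two distinct points is the set of points whose reps lie in the span
of the two reps. -/
lemma line_eq_span {p q : P2} (hpq : p ≠ q) {S : Set P2} (hS : IsLine S)
    (hp : p ∈ S) (hq : q ∈ S) :
    S = {x : P2 | x.rep ∈ Submodule.span ℂ {p.rep, q.rep}} := by
  obtain ⟨f, hf, rfl⟩ := hS
  have hker : Submodule.span ℂ {p.rep, q.rep} = LinearMap.ker f := by
    have hle : Submodule.span ℂ {p.rep, q.rep} ≤ LinearMap.ker f := by
      rw [Submodule.span_le]
      rintro x (rfl | rfl)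
      · exact hp
      · exact hq
    have hli := rep_li hpq
    have hspan : Submodule.span ℂ {p.rep, q.rep} = Submodule.span ℂ (Set.range ![p.rep, q.rep]) := by
      congr 1
      ext x
      simp only [Set.mem_insert_iff, Set.mem_singleton_iff, Set.mem_range]
      constructor
      · rintro (rfl | rfl)
        · exact ⟨0, rfl⟩
        · exact ⟨1, rfl⟩
      · rintro ⟨i, rfl⟩
        fin_cases i <;> simp
    have h2 : Module.finrank ℂ (Submodule.span ℂ {p.rep, q.rep}) = 2 := by
      rw [hspan, finrank_span_eq_card hli]
      simp
    -- finrank of the kernel is 2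
    have hrange : LinearMap.range f = ⊤ := by
      obtain ⟨u, hu⟩ : ∃ u, f u ≠ 0 := by
        by_contra hcon
        push_neg at hcon
        exact hf (LinearMap.ext fun u => by rw [hcon u, LinearMap.zero_apply])
      rw [eq_top_iff]
      intro c _
      exact ⟨(c / f u) • u, by rw [map_smul, smul_eq_mul, div_mul_cancel₀ c hu]⟩
    have hrk := LinearMap.finrank_range_add_finrank_ker f
    rw [hrange] at hrk
    have h3 : Module.finrank ℂ (Fin 3 → ℂ) = 3 := by simp
    have hT : Module.finrank ℂ (⊤ : Submodule ℂ ℂ) = 1 := by simp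
    have hk2 : Module.finrank ℂ (LinearMap.ker f) = 2 := by omega
    exact Submodule.eq_of_le_of_finrank_le hle (by rw [h2, hk2])
  ext x
  simp only [Set.mem_setOf_eq, hker, LinearMap.mem_ker]

lemma line_unique {p q : P2} (hpq : p ≠ q) {S T : Set P2} (hS : IsLine S) (hT : IsLine T)
    (hpS : p ∈ S) (hqS : q ∈ S) (hpT : p ∈ T) (hqT : q ∈ T) : S = T := by
  rw [line_eq_span hpq hS hpS hqS, line_eq_span hpq hT hpT hqT]

lemma lineThrough_eq {p q : P2} (hpq : p ≠ q) {S : Set P2} (hS : IsLine S)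
    (hp : p ∈ S) (hq : q ∈ S) : lineThrough p q = S :=
  line_unique hpq (isLine_lineThrough hpq) hS (left_mem_lineThrough p q)
    (right_mem_lineThrough p q) hp hq

/-- A 9-point set, all of whose connecting lines are 3-rich, admits exactly
twelve 3-rich lines. -/
theorem stmt1 (Z : Set P2) (hfin : Z.Finite) (hcard : Z.ncard = 9)
    (h3 : ∀ S : Set P2, IsLine S → 2 ≤ (Z ∩ S).ncard → (Z ∩ S).ncard = 3) :
    {S : Set P2 | IsLine S ∧ (Z ∩ S).ncard = 3}.ncard = 12 := by
  classical
  set Zf : Finset P2 := hfin.toFinset with hZf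
  have hZfcard : Zf.card = 9 := by
    rw [← hcard, Set.ncard_eq_toFinset_card Z hfin]
  set Pf : Finset (P2 × P2) := Zf.offDiag with hPf
  have hPfcard : Pf.card = 72 := by
    rw [hPf, Finset.offDiag_card, hZfcard]
  set φ : P2 × P2 → Set P2 := fun x => lineThrough x.1 x.2 with hφ
  set Lf : Finset (Set P2) := Pf.image φ with hLf
  -- every image line is a 3-rich line
  have hmem : ∀ x ∈ Pf, x.1 ∈ Z ∧ x.2 ∈ Z ∧ x.1 ≠ x.2 := by
    intro x hx
    rw [hPf, Finset.mem_offDiag] at hx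
    simpa [hZf, Set.Finite.mem_toFinset] using hx
  have himg : ∀ x ∈ Pf, IsLine (φ x) ∧ (Z ∩ φ x).ncard = 3 := by
    intro x hx
    obtain ⟨h1, h2, hne⟩ := hmem x hx
    refine ⟨isLine_lineThrough hne, h3 _ (isLine_lineThrough hne) ?_⟩
    have hsub : ({x.1, x.2} : Set P2) ⊆ Z ∩ φ x := by
      rintro y (rfl | rfl)
      · exact ⟨h1, left_mem_lineThrough _ _⟩
      · exact ⟨h2, right_mem_lineThrough _ _⟩
    calc (2 : ℕ) = ({x.1, x.2} : Set P2).ncard := (Set.ncard_pair hne).symm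
      _ ≤ (Z ∩ φ x).ncard := Set.ncard_le_ncard hsub (hfin.inter_of_left _)
  -- fibers have cardinality 6
  have hfiber : ∀ S ∈ Lf, (Pf.filter (fun x => φ x = S)).card = 6 := by
    intro S hS
    obtain ⟨x, hx, rfl⟩ := Finset.mem_image.mp hS
    obtain ⟨hline, hcard3⟩ := himg x hx
    have hZSfin : (Z ∩ φ x).Finite := hfin.inter_of_left _
    have hfil : Pf.filter (fun y => φ y = φ x) = hZSfin.toFinset.offDiag := by
      ext y
      simp only [Finset.mem_filter, Finset.mem_offDiag, Set.Finite.mem_toFinset,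
        Set.mem_inter_iff, hPf]
      constructor
      · rintro ⟨⟨h1, h2, hne⟩, hye⟩
        rw [Set.Finite.mem_toFinset] at h1 h2
        exact ⟨⟨h1, by rw [← hye]; exact left_mem_lineThrough _ _⟩,
          ⟨h2, by rw [← hye]; exact right_mem_lineThrough _ _⟩, hne⟩
      · rintro ⟨hy1, hy2, hne⟩
        exact ⟨⟨(Set.Finite.mem_toFinset hfin).mpr hy1.1,
          (Set.Finite.mem_toFinset hfin).mpr hy2.1, hne⟩,
          lineThrough_eq hne hline hy1.2 hy2.2⟩
    rw [hfil, Finset.offDiag_card]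
    have : hZSfin.toFinset.card = 3 := by
      rw [← Set.ncard_eq_toFinset_card _ hZSfin, hcard3]
    rw [this]
  -- count
  have hcount := Finset.card_eq_sum_card_fiberwise
    (fun x hx => Finset.mem_image_of_mem φ hx : ∀ x ∈ Pf, φ x ∈ Lf)
  rw [hPfcard, Finset.sum_congr rfl hfiber, Finset.sum_const, smul_eq_mul] at hcount
  have hLfcard : Lf.card = 12 := by omega
  -- identify the set of 3-rich lines with Lf
  have hsetEq : {S : Set P2 | IsLine S ∧ (Z ∩ S).ncard = 3} = ↑Lf := by
    ext S
    rw [Set.mem_setOf_eq, Finset.mem_coe, hLf, Finset.mem_image]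
    constructor
    · rintro ⟨hline, hc3⟩
      have h2 : 1 < (Z ∩ S).ncard := by omega
      obtain ⟨a, b, ha, hb, hne⟩ := (Set.one_lt_ncard_iff (hfin.inter_of_left S)).mp h2
      refine ⟨(a, b), ?_, lineThrough_eq hne hline ha.2 hb.2⟩
      rw [hPf, Finset.mem_offDiag]
      exact ⟨(Set.Finite.mem_toFinset hfin).mpr ha.1, (Set.Finite.mem_toFinset hfin).mpr hb.1, hne⟩
    · rintro ⟨x, hx, rfl⟩
      exact himg x hx
  rw [hsetEq, Set.ncard_coe_finset, hLfcard]
end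
end

section
/- Up to projective equivalence, the dual Fermat configuration F_3 is the only configuration of nine points in the complex projective plane with no k-rich lines for every k ≥ 4 and no simple lines, i.e., such that every line meeting the configuration in at least two points contains exactly three of its points. -/
open MvPolynomial

noncomputable section

/-- The dual Fermat configuration `F₃`: the nine points
`[1, -ω^a, 0]`, `[1, 0, -ω^a]`, `[0, 1, -ω^a]` for `a = 0, 1, 2`. -/
def F3 (ω : ℂ) : Set P2 :=
  ⋃ a : Fin 3,
    ({pt ![1, -ω ^ (a : ℕ), 0] (by intro h; simpa using congrFun h 0),
      pt ![1, 0, -ω ^ (a : ℕ)] (by intro h; simpa using congrFun h 0),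
      pt ![0, 1, -ω ^ (a : ℕ)] (by intro h; simpa using congrFun h 1)} : Set P2)
set_option maxHeartbeats 1000000

namespace StmtAux

abbrev V3 := Fin 3 → ℂ

/-- linear form with coefficient vector c -/
def dlf (c : V3) : V3 →ₗ[ℂ] ℂ :=
  c 0 • LinearMap.proj 0 + c 1 • LinearMap.proj 1 + c 2 • LinearMap.proj 2

lemma dlf_apply (c x : V3) : dlf c x = c 0 * x 0 + c 1 * x 1 + c 2 * x 2 := by
  simp [dlf]

lemma dlf_ne_zero {c : V3} (hc : c ≠ 0) : dlf c ≠ 0 := by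
  intro h
  apply hc
  funext i
  have := congrArg (fun f : V3 →ₗ[ℂ] ℂ => f (Pi.single i 1)) h
  fin_cases i <;> simpa [dlf_apply, Pi.single_apply] using this

lemma rep_eq (u : V3) (hu : u ≠ 0) :
    ∃ a : ℂ, a ≠ 0 ∧ (Projectivization.mk ℂ u hu).rep = a • u := by
  have h := Projectivization.mk_rep (Projectivization.mk ℂ u hu)
  rw [Projectivization.mk_eq_mk_iff] at h
  obtain ⟨a, ha⟩ := h
  exact ⟨(a : ℂ), a.ne_zero, ha.symm⟩

lemma mk_smul_eq {u : V3} (hu : u ≠ 0) {a : ℂ} (ha : a ≠ 0) :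
    Projectivization.mk ℂ (a • u) (by simp [ha, hu, smul_eq_zero]) =
      Projectivization.mk ℂ u hu := by
  rw [Projectivization.mk_eq_mk_iff]
  exact ⟨Units.mk0 a ha, rfl⟩

def det3 (u v w : V3) : ℂ := Matrix.det (Matrix.of ![u, v, w])

lemma det3_expand (u v w : V3) :
    det3 u v w = u 0 * v 1 * w 2 - u 0 * v 2 * w 1 - u 1 * v 0 * w 2
      + u 1 * v 2 * w 0 + u 2 * v 0 * w 1 - u 2 * v 1 * w 0 := by
  simp only [det3, Matrix.det_fin_three, Matrix.of_apply, Matrix.cons_val', Matrix.cons_val_zero,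
    Matrix.cons_val_one, Matrix.head_cons, Matrix.empty_val', Matrix.cons_val_fin_one,
    Matrix.cons_val_two, Matrix.tail_cons, Matrix.head_fin_const]
  try ring

lemma vecMul_of3 (g : V3) (u v w : V3) :
    Matrix.vecMul g (Matrix.of ![u, v, w]) = g 0 • u + g 1 • v + g 2 • w := by
  funext j
  simp [Matrix.vecMul, dotProduct, Fin.sum_univ_three]

lemma mulVec_of3 (u v w c : V3) :
    (Matrix.of ![u, v, w]).mulVec c =
      ![c 0 * u 0 + c 1 * u 1 + c 2 * u 2,
        c 0 * v 0 + c 1 * v 1 + c 2 * v 2,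
        c 0 * w 0 + c 1 * w 1 + c 2 * w 2] := by
  funext i
  fin_cases i <;> simp [Matrix.mulVec, dotProduct, Fin.sum_univ_three] <;> ring

lemma det3_eq_zero_iff (u v w : V3) :
    det3 u v w = 0 ↔ ∃ g : V3, g ≠ 0 ∧ g 0 • u + g 1 • v + g 2 • w = 0 := by
  rw [det3, ← Matrix.exists_vecMul_eq_zero_iff]
  constructor
  · rintro ⟨g, hg, h⟩
    exact ⟨g, hg, by rw [← vecMul_of3]; exact h⟩
  · rintro ⟨g, hg, h⟩
    exact ⟨g, hg, by rw [vecMul_of3]; exact h⟩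

lemma lform_eval (f : V3 →ₗ[ℂ] ℂ) (x : V3) :
    f x = x 0 * f (Pi.single 0 1) + x 1 * f (Pi.single 1 1) + x 2 * f (Pi.single 2 1) := by
  have hx : x = x 0 • (Pi.single 0 1 : V3) + x 1 • (Pi.single 1 1 : V3) + x 2 • (Pi.single 2 1 : V3) := by
    funext j
    fin_cases j <;> simp [Pi.single_apply]
  conv_lhs => rw [hx]
  simp [smul_eq_mul]

/-- main bridge: collinearity of mk's is vanishing of det3 -/
lemma collinear_mk_iff {u v w : V3} (hu : u ≠ 0) (hv : v ≠ 0) (hw : w ≠ 0) :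
    Collinear3 (Projectivization.mk ℂ u hu) (Projectivization.mk ℂ v hv)
      (Projectivization.mk ℂ w hw) ↔ det3 u v w = 0 := by
  constructor
  · rintro ⟨S, ⟨f, hf, rfl⟩, h1, h2, h3⟩
    have key : ∀ (x : V3) (hx : x ≠ 0),
        (Projectivization.mk ℂ x hx) ∈ {p : P2 | f p.rep = 0} → f x = 0 := by
      intro x hx hmem
      obtain ⟨a, ha, hrep⟩ := rep_eq x hx
      have : f ((Projectivization.mk ℂ x hx).rep) = 0 := hmem
      rw [hrep, map_smul, smul_eq_mul] at this
      exact (mul_eq_zero.1 this).resolve_left ha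
    have hu' := key u hu h1
    have hv' := key v hv h2
    have hw' := key w hw h3
    set c : V3 := ![f (Pi.single 0 1), f (Pi.single 1 1), f (Pi.single 2 1)] with hc
    have hcne : c ≠ 0 := by
      intro h0
      apply hf
      apply LinearMap.ext
      intro x
      have e0 := congrFun h0 0
      have e1 := congrFun h0 1
      have e2 := congrFun h0 2
      simp [hc] at e0 e1 e2
      rw [lform_eval f x, e0, e1, e2]
      simp
    rw [det3, ← Matrix.exists_mulVec_eq_zero_iff]
    refine ⟨c, hcne, ?_⟩
    rw [mulVec_of3]
    have eu : f u = u 0 * c 0 + u 1 * c 1 + u 2 * c 2 := by rw [lform_eval f u]; simp [hc]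
    have ev : f v = v 0 * c 0 + v 1 * c 1 + v 2 * c 2 := by rw [lform_eval f v]; simp [hc]
    have ew : f w = w 0 * c 0 + w 1 * c 1 + w 2 * c 2 := by rw [lform_eval f w]; simp [hc]
    funext i
    have e0 := lform_eval f u
    have e1 := lform_eval f v
    have e2 := lform_eval f w
    rw [hu'] at e0; rw [hv'] at e1; rw [hw'] at e2
    fin_cases i
    · show c 0 * u 0 + c 1 * u 1 + c 2 * u 2 = 0
      simp only [hc, Matrix.cons_val_zero, Matrix.cons_val_one, Matrix.head_cons,
        Matrix.cons_val_two, Matrix.tail_cons]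
      linear_combination -e0
    · show c 0 * v 0 + c 1 * v 1 + c 2 * v 2 = 0
      simp only [hc, Matrix.cons_val_zero, Matrix.cons_val_one, Matrix.head_cons,
        Matrix.cons_val_two, Matrix.tail_cons]
      linear_combination -e1
    · show c 0 * w 0 + c 1 * w 1 + c 2 * w 2 = 0
      simp only [hc, Matrix.cons_val_zero, Matrix.cons_val_one, Matrix.head_cons,
        Matrix.cons_val_two, Matrix.tail_cons]
      linear_combination -e2
  · intro hdet
    rw [det3, ← Matrix.exists_mulVec_eq_zero_iff] at hdet
    obtain ⟨c, hcne, hc⟩ := hdet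
    rw [mulVec_of3] at hc
    have h0 := congrFun hc 0
    have h1 := congrFun hc 1
    have h2 := congrFun hc 2
    simp only [Matrix.cons_val_zero, Matrix.cons_val_one, Matrix.head_cons, Pi.zero_apply,
      Matrix.cons_val_two, Matrix.tail_cons] at h0 h1 h2
    refine ⟨{p : P2 | dlf c p.rep = 0}, ⟨dlf c, dlf_ne_zero hcne, rfl⟩, ?_, ?_, ?_⟩
    · show dlf c (Projectivization.mk ℂ u hu).rep = 0
      obtain ⟨a, ha, hrep⟩ := rep_eq u hu
      rw [hrep, map_smul, smul_eq_mul, dlf_apply]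
      rw [show c 0 * u 0 + c 1 * u 1 + c 2 * u 2 = 0 from by linear_combination h0]
      ring
    · show dlf c (Projectivization.mk ℂ v hv).rep = 0
      obtain ⟨a, ha, hrep⟩ := rep_eq v hv
      rw [hrep, map_smul, smul_eq_mul, dlf_apply]
      rw [show c 0 * v 0 + c 1 * v 1 + c 2 * v 2 = 0 from by linear_combination h1]
      ring
    · show dlf c (Projectivization.mk ℂ w hw).rep = 0
      obtain ⟨a, ha, hrep⟩ := rep_eq w hw
      rw [hrep, map_smul, smul_eq_mul, dlf_apply]
      rw [show c 0 * w 0 + c 1 * w 1 + c 2 * w 2 = 0 from by linear_combination h2]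
      ring

lemma col_swap12 {p q r : P2} (h : Collinear3 p q r) : Collinear3 q p r := by
  obtain ⟨S, hS, h1, h2, h3⟩ := h; exact ⟨S, hS, h2, h1, h3⟩

lemma col_swap23 {p q r : P2} (h : Collinear3 p q r) : Collinear3 p r q := by
  obtain ⟨S, hS, h1, h2, h3⟩ := h; exact ⟨S, hS, h1, h3, h2⟩

lemma col_rot {p q r : P2} (h : Collinear3 p q r) : Collinear3 q r p := by
  obtain ⟨S, hS, h1, h2, h3⟩ := h; exact ⟨S, hS, h2, h3, h1⟩

lemma col_rot' {p q r : P2} (h : Collinear3 p q r) : Collinear3 r p q := by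
  obtain ⟨S, hS, h1, h2, h3⟩ := h; exact ⟨S, hS, h3, h1, h2⟩

lemma col_swap13 {p q r : P2} (h : Collinear3 p q r) : Collinear3 r q p := by
  obtain ⟨S, hS, h1, h2, h3⟩ := h; exact ⟨S, hS, h3, h2, h1⟩

lemma collinear_iff_det_rep (p q r : P2) :
    Collinear3 p q r ↔ det3 p.rep q.rep r.rep = 0 := by
  rw [← collinear_mk_iff p.rep_nonzero q.rep_nonzero r.rep_nonzero]
  rw [Projectivization.mk_rep, Projectivization.mk_rep, Projectivization.mk_rep]

def cross (u v : V3) : V3 :=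
  ![u 1 * v 2 - u 2 * v 1, u 2 * v 0 - u 0 * v 2, u 0 * v 1 - u 1 * v 0]

lemma cross_dot (u v x : V3) : dlf (cross u v) x = det3 u v x := by
  rw [dlf_apply, det3_expand]
  simp [cross]
  ring

lemma cross_eq_zero {u v : V3} (hu : u ≠ 0) (h : cross u v = 0) : ∃ k : ℂ, v = k • u := by
  have h0 : u 1 * v 2 - u 2 * v 1 = 0 := by simpa [cross] using congrFun h 0
  have h1 : u 2 * v 0 - u 0 * v 2 = 0 := by simpa [cross] using congrFun h 1
  have h2 : u 0 * v 1 - u 1 * v 0 = 0 := by simpa [cross] using congrFun h 2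
  have hune : u 0 ≠ 0 ∨ u 1 ≠ 0 ∨ u 2 ≠ 0 := by
    by_contra hcon
    push_neg at hcon
    exact hu (by funext j; fin_cases j <;> simp [hcon.1, hcon.2.1, hcon.2.2])
  rcases hune with hc | hc | hc
  · refine ⟨v 0 / u 0, ?_⟩
    funext j; fin_cases j <;> simp [smul_eq_mul] <;> field_simp
    · linear_combination h2
    · linear_combination -h1
  · refine ⟨v 1 / u 1, ?_⟩
    funext j; fin_cases j <;> simp [smul_eq_mul] <;> field_simp
    · linear_combination -h2
    · linear_combination h0
  · refine ⟨v 2 / u 2, ?_⟩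
    funext j; fin_cases j <;> simp [smul_eq_mul] <;> field_simp
    · linear_combination h1
    · linear_combination -h0

lemma eq_of_rep_smul {X : P2} {u : V3} (hu : u ≠ 0) {x : ℂ} (h : X.rep = x • u) :
    X = Projectivization.mk ℂ u hu := by
  have hx : x ≠ 0 := by
    rintro rfl
    exact X.rep_nonzero (by simpa using h)
  rw [← Projectivization.mk_rep X, Projectivization.mk_eq_mk_iff]
  exact ⟨Units.mk0 x hx, h.symm⟩

lemma dep2 {u v : V3} (hu : u ≠ 0) (hv : v ≠ 0)
    (hne : Projectivization.mk ℂ u hu ≠ Projectivization.mk ℂ v hv)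
    {a b : ℂ} (h : a • u + b • v = 0) : a = 0 ∧ b = 0 := by
  by_cases hb : b = 0
  · subst hb
    simp only [zero_smul, add_zero, smul_eq_zero] at h
    exact ⟨h.resolve_right hu, rfl⟩
  · exfalso
    apply hne
    have hvu : v = (-a / b) • u := by
      funext j
      have hj := congrFun h j
      simp only [Pi.add_apply, Pi.smul_apply, smul_eq_mul, Pi.zero_apply] at hj ⊢
      field_simp
      linear_combination hj
    have hk : (-a / b) ≠ 0 := by
      intro h0
      exact hv (by rw [hvu, h0, zero_smul])
    exact ((Projectivization.mk_eq_mk_iff ℂ v u hv hu).2 ⟨Units.mk0 _ hk, hvu.symm⟩).symm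
  
lemma span2 {u v : V3} (hu : u ≠ 0) (hv : v ≠ 0)
    (hne : Projectivization.mk ℂ u hu ≠ Projectivization.mk ℂ v hv)
    {w : V3} (hdet : det3 u v w = 0) : ∃ a b : ℂ, w = a • u + b • v := by
  obtain ⟨g, hg, hsum⟩ := (det3_eq_zero_iff u v w).1 hdet
  by_cases h2 : g 2 = 0
  · exfalso
    rw [h2, zero_smul, add_zero] at hsum
    obtain ⟨e0, e1⟩ := dep2 hu hv hne hsum
    exact hg (by funext j; fin_cases j <;> simp [e0, e1, h2])
  · refine ⟨-g 0 / g 2, -g 1 / g 2, ?_⟩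
    funext j
    have hj := congrFun hsum j
    simp only [Pi.add_apply, Pi.smul_apply, smul_eq_mul, Pi.zero_apply] at hj ⊢
    field_simp
    linear_combination hj

lemma uniq3' {u v w : V3} (hdet : det3 u v w ≠ 0) {x y z : ℂ}
    (h : x • u + y • v + z • w = 0) : x = 0 ∧ y = 0 ∧ z = 0 := by
  refine ⟨?_, ?_, ?_⟩ <;> by_contra hx <;>
    refine hdet ((det3_eq_zero_iff u v w).2 ⟨![x, y, z], ?_, by simpa using h⟩)
  · exact fun h0 => hx (by simpa using congrFun h0 0)
  · exact fun h0 => hx (by simpa using congrFun h0 1)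
  · exact fun h0 => hx (by simpa using congrFun h0 2)

lemma uniq3 {u v w : V3} (hdet : det3 u v w ≠ 0) {x y z x' y' z' : ℂ}
    (h : x • u + y • v + z • w = x' • u + y' • v + z' • w) :
    x = x' ∧ y = y' ∧ z = z' := by
  have h0 : (x - x') • u + (y - y') • v + (z - z') • w = 0 := by
    funext j
    have hj := congrFun h j
    simp only [Pi.add_apply, Pi.smul_apply, smul_eq_mul, Pi.zero_apply] at hj ⊢
    linear_combination hj
  obtain ⟨e0, e1, e2⟩ := uniq3' hdet h0
  exact ⟨by linear_combination e0, by linear_combination e1, by linear_combination e2⟩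

lemma det3_comb (x0 y0 z0 x1 y1 z1 x2 y2 z2 : ℂ) (u v w : V3) :
    det3 (x0 • u + y0 • v + z0 • w) (x1 • u + y1 • v + z1 • w) (x2 • u + y2 • v + z2 • w) =
      (x0 * (y1 * z2 - z1 * y2) - y0 * (x1 * z2 - z1 * x2) + z0 * (x1 * y2 - y1 * x2))
        * det3 u v w := by
  simp only [det3_expand, Pi.add_apply, Pi.smul_apply, smul_eq_mul]
  ring

lemma three_mem {s : Set P2} (h : s.ncard = 3) {p q : P2} (hp : p ∈ s) (hq : q ∈ s)
    (hpq : p ≠ q) : ∃ r, r ≠ p ∧ r ≠ q ∧ s = {p, q, r} := by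
  obtain ⟨x, y, z, hxy, hxz, hyz, rfl⟩ := Set.ncard_eq_three.1 h
  simp only [Set.mem_insert_iff, Set.mem_singleton_iff] at hp hq
  rcases hp with rfl | rfl | rfl <;> rcases hq with rfl | rfl | rfl
  · exact absurd rfl hpq
  · exact ⟨z, Ne.symm hxz, Ne.symm hyz, rfl⟩
  · exact ⟨y, Ne.symm hxy, hyz, by ext a; simp; tauto⟩
  · exact ⟨z, Ne.symm hyz, Ne.symm hxz, by ext a; simp; tauto⟩
  · exact absurd rfl hpq
  · exact ⟨x, hxy, hxz, by ext a; simp; tauto⟩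
  · exact ⟨y, hyz, Ne.symm hxy, by ext a; simp; tauto⟩
  · exact ⟨x, hxz, hxy, by ext a; simp; tauto⟩
  · exact absurd rfl hpq

lemma third_exists (Z : Set P2) (hZfin : Z.Finite)
    (h3 : ∀ S : Set P2, IsLine S → 2 ≤ (Z ∩ S).ncard → (Z ∩ S).ncard = 3)
    {p q : P2} (hp : p ∈ Z) (hq : q ∈ Z) (hpq : p ≠ q) :
    ∃ r, r ∈ Z ∧ r ≠ p ∧ r ≠ q ∧ Collinear3 p q r ∧
      ∀ x, x ∈ Z → Collinear3 p q x → x = p ∨ x = q ∨ x = r := by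
  set u := p.rep with hu_def
  set v := q.rep with hv_def
  have hu : u ≠ 0 := p.rep_nonzero
  have hv : v ≠ 0 := q.rep_nonzero
  have hcne : cross u v ≠ 0 := by
    intro h
    obtain ⟨k, hk⟩ := cross_eq_zero hu h
    apply hpq
    have : q = Projectivization.mk ℂ u hu := eq_of_rep_smul hu hk
    rw [this, ← Projectivization.mk_rep p]
  set S : Set P2 := {x : P2 | dlf (cross u v) x.rep = 0} with hS_def
  have hline : IsLine S := ⟨dlf (cross u v), dlf_ne_zero hcne, rfl⟩
  have memS : ∀ x : P2, x ∈ S ↔ det3 u v x.rep = 0 := by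
    intro x
    rw [hS_def]
    simp only [Set.mem_setOf_eq]
    rw [cross_dot]
  have hpS : p ∈ S := by rw [memS]; rw [det3_expand]; ring
  have hqS : q ∈ S := by rw [memS]; rw [det3_expand]; ring
  have h2le : 2 ≤ (Z ∩ S).ncard := by
    have hsub : ({p, q} : Set P2) ⊆ Z ∩ S := by
      rintro x (rfl | rfl)
      exacts [⟨hp, hpS⟩, ⟨hq, hqS⟩]
    calc 2 = ({p, q} : Set P2).ncard := (Set.ncard_pair hpq).symm
    _ ≤ (Z ∩ S).ncard := Set.ncard_le_ncard hsub (hZfin.inter_of_left S)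
  have hcard3 := h3 S hline h2le
  obtain ⟨r, hrp, hrq, hEq⟩ := three_mem hcard3 ⟨hp, hpS⟩ ⟨hq, hqS⟩ hpq
  have hrZS : r ∈ Z ∩ S := by rw [hEq]; right; right; rfl
  refine ⟨r, hrZS.1, hrp, hrq, ⟨S, hline, hpS, hqS, hrZS.2⟩, ?_⟩
  intro x hx hcol
  have hxS : x ∈ S := by
    rw [memS]
    exact (collinear_iff_det_rep p q x).1 hcol
  have : x ∈ ({p, q, r} : Set P2) := hEq ▸ (⟨hx, hxS⟩ : x ∈ Z ∩ S)
  simpa using this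

lemma build (Z : Set P2) (hcard : Z.ncard = 9)
    (h3 : ∀ S : Set P2, IsLine S → 2 ≤ (Z ∩ S).ncard → (Z ∩ S).ncard = 3) :
    ∃ A B C D E F G H I : P2,
      Z = {A, B, C, D, E, F, G, H, I} ∧
      (¬Collinear3 A B D ∧ ¬Collinear3 A B H ∧ ¬Collinear3 A D H ∧ ¬Collinear3 B D H) ∧
      (Collinear3 A B C ∧ Collinear3 A D E ∧ Collinear3 B D F ∧ Collinear3 C D G ∧
        Collinear3 D H I ∧ Collinear3 A F H ∧ Collinear3 B G H ∧ Collinear3 A G I ∧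
        Collinear3 C E H ∧ Collinear3 B E I) ∧
      (A ≠ B ∧ C ≠ A ∧ C ≠ B ∧ C ≠ D ∧ E ≠ A ∧ E ≠ D ∧ F ≠ B ∧ F ≠ D ∧ G ≠ C ∧ G ≠ D ∧
        I ≠ D ∧ D ≠ H ∧ A ≠ D ∧ B ≠ D) := by
  have hZfin : Z.Finite := Set.finite_of_ncard_ne_zero (by rw [hcard]; norm_num)
  have tex : ∀ {p q : P2}, p ∈ Z → q ∈ Z → p ≠ q → ∃ r, r ∈ Z ∧ r ≠ p ∧ r ≠ q ∧
      Collinear3 p q r ∧ ∀ x, x ∈ Z → Collinear3 p q x → x = p ∨ x = q ∨ x = r :=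
    fun hp hq hpq => third_exists Z hZfin h3 hp hq hpq
  have noncol : ∀ p q r x : P2, p ∈ Z → q ∈ Z → r ∈ Z → x ∈ Z → p ≠ q → r ≠ p → r ≠ q →
      x ≠ p → x ≠ q → x ≠ r → Collinear3 p q r → Collinear3 p q x → False := by
    intro p q r x hp hq hr hx hpq hrp hrq hxp hxq hxr hcol hcolx
    obtain ⟨t, htZ, htp, htq, hcolt, hu⟩ := tex hp hq hpq
    have hrt : r = t := by
      rcases hu r hr hcol with h | h | h
      · exact absurd h hrp
      · exact absurd h hrq
      · exact h
    rcases hu x hx hcolx with h | h | h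
    · exact hxp h
    · exact hxq h
    · rw [← hrt] at h; exact hxr h
  obtain ⟨A, B, hA, hB, hAB⟩ := (Set.one_lt_ncard_iff hZfin).1 (by rw [hcard]; norm_num)
  obtain ⟨C, hC, hCA, hCB, colABC, uAB⟩ := tex hA hB hAB
  have hD' : ∃ D, D ∈ Z ∧ D ∉ ({A, B, C} : Set P2) := by
    by_contra hcon
    push_neg at hcon
    have h1 : Z.ncard ≤ ({A, B, C} : Set P2).ncard :=
      Set.ncard_le_ncard (fun x hx => hcon x hx) (Set.toFinite _)
    have h2 : ({A, B, C} : Set P2).ncard ≤ 3 := by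
      apply (Set.ncard_insert_le _ _).trans
      have h3' : ({B, C} : Set P2).ncard ≤ 2 := by
        apply (Set.ncard_insert_le _ _).trans
        simp [Set.ncard_singleton]
      omega
    rw [hcard] at h1
    omega
  obtain ⟨D, hD, hDnot⟩ := hD'
  simp only [Set.mem_insert_iff, Set.mem_singleton_iff, not_or] at hDnot
  obtain ⟨hDA, hDB, hDC⟩ := hDnot
  have hnABD : ¬Collinear3 A B D := by
    intro h
    rcases uAB D hD h with h' | h' | h'
    exacts [hDA h', hDB h', hDC h']
  have hnACD : ¬Collinear3 A C D := fun h =>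
    noncol A C B D hA hC hB hD (Ne.symm hCA) (Ne.symm hAB) (Ne.symm hCB) hDA hDC hDB
      (col_swap23 colABC) h
  have hnBCD : ¬Collinear3 B C D := fun h =>
    noncol B C A D hB hC hA hD (Ne.symm hCB) hAB (Ne.symm hCA) hDB hDC hDA
      (col_rot colABC) h
  obtain ⟨E, hE, hEA, hED, colADE, uAD⟩ := tex hA hD (Ne.symm hDA)
  have hEB : E ≠ B := by
    intro h; rw [h] at colADE; exact hnABD (col_swap23 colADE)
  have hEC : E ≠ C := by
    intro h; rw [h] at colADE; exact hnACD (col_swap23 colADE)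
  obtain ⟨F, hF, hFB, hFD, colBDF, uBD⟩ := tex hB hD (Ne.symm hDB)
  have hFA : F ≠ A := by
    intro h; rw [h] at colBDF; exact hnABD (col_swap23 (col_swap13 colBDF))
  have hFC : F ≠ C := by
    intro h; rw [h] at colBDF; exact hnBCD (col_swap23 colBDF)
  have hFE : F ≠ E := by
    intro h; rw [h] at colBDF
    exact noncol D E A B hD hE hA hB (Ne.symm hED) (Ne.symm hDA) (Ne.symm hEA) (Ne.symm hDB)
      (Ne.symm hEB) (Ne.symm hAB) (col_rot colADE) (col_rot colBDF)
  obtain ⟨G, hG, hGC, hGD, colCDG, uCD⟩ := tex hC hD (Ne.symm hDC)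
  have hGA : G ≠ A := by
    intro h; rw [h] at colCDG; exact hnACD (col_swap23 (col_swap13 colCDG))
  have hGB : G ≠ B := by
    intro h; rw [h] at colCDG; exact hnBCD (col_swap23 (col_swap13 colCDG))
  have hGE : G ≠ E := by
    intro h; rw [h] at colCDG
    exact noncol D E A C hD hE hA hC (Ne.symm hED) (Ne.symm hDA) (Ne.symm hEA) (Ne.symm hDC)
      (Ne.symm hEC) hCA (col_rot colADE) (col_rot colCDG)
  have hGF : G ≠ F := by
    intro h; rw [h] at colCDG
    exact noncol D F B C hD hF hB hC (Ne.symm hFD) (Ne.symm hDB) (Ne.symm hFB) (Ne.symm hDC)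
      (Ne.symm hFC) hCB (col_rot colBDF) (col_rot colCDG)
  have h7card : ({A, B, C, D, E, F, G} : Set P2).ncard = 7 := by
    rw [Set.ncard_insert_of_notMem (by
        simp only [Set.mem_insert_iff, Set.mem_singleton_iff, not_or]
        exact ⟨hAB, Ne.symm hCA, Ne.symm hDA, Ne.symm hEA, Ne.symm hFA, Ne.symm hGA⟩),
      Set.ncard_insert_of_notMem (by
        simp only [Set.mem_insert_iff, Set.mem_singleton_iff, not_or]
        exact ⟨Ne.symm hCB, Ne.symm hDB, Ne.symm hEB, Ne.symm hFB, Ne.symm hGB⟩),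
      Set.ncard_insert_of_notMem (by
        simp only [Set.mem_insert_iff, Set.mem_singleton_iff, not_or]
        exact ⟨Ne.symm hDC, Ne.symm hEC, Ne.symm hFC, Ne.symm hGC⟩),
      Set.ncard_insert_of_notMem (by
        simp only [Set.mem_insert_iff, Set.mem_singleton_iff, not_or]
        exact ⟨Ne.symm hED, Ne.symm hFD, Ne.symm hGD⟩),
      Set.ncard_insert_of_notMem (by
        simp only [Set.mem_insert_iff, Set.mem_singleton_iff, not_or]
        exact ⟨Ne.symm hFE, Ne.symm hGE⟩),
      Set.ncard_insert_of_notMem (by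
        simp only [Set.mem_singleton_iff]
        exact Ne.symm hGF),
      Set.ncard_singleton]
  have hsub7 : ({A, B, C, D, E, F, G} : Set P2) ⊆ Z := by
    intro x hx
    simp only [Set.mem_insert_iff, Set.mem_singleton_iff] at hx
    rcases hx with rfl | rfl | rfl | rfl | rfl | rfl | rfl <;> assumption
  have hdiff : (Z \ {A, B, C, D, E, F, G}).ncard = 2 := by
    rw [Set.ncard_diff hsub7 (Set.toFinite _), hcard, h7card]
  obtain ⟨X, Y, hXY, hXYeq⟩ := Set.ncard_eq_two.1 hdiff
  have hXmem : X ∈ Z \ {A, B, C, D, E, F, G} := by rw [hXYeq]; left; rfl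
  have hYmem : Y ∈ Z \ {A, B, C, D, E, F, G} := by rw [hXYeq]; right; rfl
  obtain ⟨hXZ, hX7⟩ := hXmem
  obtain ⟨hYZ, hY7⟩ := hYmem
  simp only [Set.mem_insert_iff, Set.mem_singleton_iff, not_or] at hX7 hY7
  obtain ⟨hXA, hXB, hXC, hXD, hXE, hXF, hXG⟩ := hX7
  obtain ⟨hYA, hYB, hYC, hYD, hYE, hYF, hYG⟩ := hY7
  have hZeq' : Z = {A, B, C, D, E, F, G} ∪ {X, Y} := by
    have h := Set.union_diff_cancel hsub7
    rw [hXYeq] at h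
    exact h.symm
  have memXY : ∀ W, W ∈ Z → W ≠ A → W ≠ B → W ≠ C → W ≠ D → W ≠ E → W ≠ F → W ≠ G →
      (W = X ∨ W = Y) := by
    intro W hW n1 n2 n3 n4 n5 n6 n7
    have hmem : W ∈ Z \ ({A, B, C, D, E, F, G} : Set P2) := by
      refine ⟨hW, ?_⟩
      simp only [Set.mem_insert_iff, Set.mem_singleton_iff, not_or]
      exact ⟨n1, n2, n3, n4, n5, n6, n7⟩
    rw [hXYeq] at hmem
    simpa using hmem
  have hnAFG : ¬Collinear3 A F G := by
    intro hAFG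
    obtain ⟨T, hTZ, hTA, hTX, colAXT, _⟩ := tex hA hXZ (Ne.symm hXA)
    have hTB : T ≠ B := by
      intro h; rw [h] at colAXT
      exact noncol A B C X hA hB hC hXZ hAB hCA hCB hXA hXB hXC colABC (col_swap23 colAXT)
    have hTC : T ≠ C := by
      intro h; rw [h] at colAXT
      exact noncol A C B X hA hC hB hXZ (Ne.symm hCA) (Ne.symm hAB) (Ne.symm hCB) hXA hXC hXB
        (col_swap23 colABC) (col_swap23 colAXT)
    have hTD : T ≠ D := by
      intro h; rw [h] at colAXT
      exact noncol A D E X hA hD hE hXZ (Ne.symm hDA) hEA hED hXA hXD hXE colADE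
        (col_swap23 colAXT)
    have hTE : T ≠ E := by
      intro h; rw [h] at colAXT
      exact noncol A E D X hA hE hD hXZ (Ne.symm hEA) hDA (Ne.symm hED) hXA hXE hXD
        (col_swap23 colADE) (col_swap23 colAXT)
    have hTF : T ≠ F := by
      intro h; rw [h] at colAXT
      exact noncol A F G X hA hF hG hXZ (Ne.symm hFA) hGA hGF hXA hXF hXG hAFG
        (col_swap23 colAXT)
    have hTG : T ≠ G := by
      intro h; rw [h] at colAXT
      exact noncol A G F X hA hG hF hXZ (Ne.symm hGA) hFA (Ne.symm hGF) hXA hXG hXF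
        (col_swap23 hAFG) (col_swap23 colAXT)
    have hTY : T = Y := (memXY T hTZ hTA hTB hTC hTD hTE hTF hTG).resolve_left hTX
    rw [hTY] at colAXT
    obtain ⟨T', hT'Z, hT'D, hT'X, colDXT, _⟩ := tex hD hXZ (Ne.symm hXD)
    have hT'A : T' ≠ A := by
      intro h; rw [h] at colDXT
      exact noncol A D E X hA hD hE hXZ (Ne.symm hDA) hEA hED hXA hXD hXE colADE
        (col_swap23 (col_swap13 colDXT))
    have hT'B : T' ≠ B := by
      intro h; rw [h] at colDXT
      exact noncol B D F X hB hD hF hXZ (Ne.symm hDB) hFB hFD hXB hXD hXF colBDF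
        (col_swap23 (col_swap13 colDXT))
    have hT'C : T' ≠ C := by
      intro h; rw [h] at colDXT
      exact noncol C D G X hC hD hG hXZ (Ne.symm hDC) hGC hGD hXC hXD hXG colCDG
        (col_swap23 (col_swap13 colDXT))
    have hT'E : T' ≠ E := by
      intro h; rw [h] at colDXT
      exact noncol D E A X hD hE hA hXZ (Ne.symm hED) (Ne.symm hDA) (Ne.symm hEA) hXD hXE hXA
        (col_rot colADE) (col_swap23 colDXT)
    have hT'F : T' ≠ F := by
      intro h; rw [h] at colDXT
      exact noncol D F B X hD hF hB hXZ (Ne.symm hFD) (Ne.symm hDB) (Ne.symm hFB) hXD hXF hXB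
        (col_rot colBDF) (col_swap23 colDXT)
    have hT'G : T' ≠ G := by
      intro h; rw [h] at colDXT
      exact noncol D G C X hD hG hC hXZ (Ne.symm hGD) (Ne.symm hDC) (Ne.symm hGC) hXD hXG hXC
        (col_rot colCDG) (col_swap23 colDXT)
    have hT'Y : T' = Y := (memXY T' hT'Z hT'A hT'B hT'C hT'D hT'E hT'F hT'G).resolve_left hT'X
    rw [hT'Y] at colDXT
    exact noncol X Y A D hXZ hYZ hA hD hXY (Ne.symm hXA) (Ne.symm hYA) (Ne.symm hXD)
      (Ne.symm hYD) hDA (col_rot colAXT) (col_rot colDXT)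
  obtain ⟨H, hHZ, hHA, hHF, colAFH, _⟩ := tex hA hF (Ne.symm hFA)
  have hHB : H ≠ B := by
    intro h; rw [h] at colAFH
    exact noncol A B C F hA hB hC hF hAB hCA hCB hFA hFB hFC colABC (col_swap23 colAFH)
  have hHC : H ≠ C := by
    intro h; rw [h] at colAFH
    exact noncol A C B F hA hC hB hF (Ne.symm hCA) (Ne.symm hAB) (Ne.symm hCB) hFA hFC hFB
      (col_swap23 colABC) (col_swap23 colAFH)
  have hHD : H ≠ D := by
    intro h; rw [h] at colAFH
    exact noncol A D E F hA hD hE hF (Ne.symm hDA) hEA hED hFA hFD hFE colADE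
      (col_swap23 colAFH)
  have hHE : H ≠ E := by
    intro h; rw [h] at colAFH
    exact noncol A E D F hA hE hD hF (Ne.symm hEA) hDA (Ne.symm hED) hFA hFE hFD
      (col_swap23 colADE) (col_swap23 colAFH)
  have hHG : H ≠ G := by
    intro h; rw [h] at colAFH
    exact hnAFG colAFH
  obtain ⟨I, hIZ, hIH, hIA, hIB, hIC, hID, hIE, hIF, hIG, hZeq⟩ :
      ∃ I, I ∈ Z ∧ I ≠ H ∧ I ≠ A ∧ I ≠ B ∧ I ≠ C ∧ I ≠ D ∧ I ≠ E ∧ I ≠ F ∧ I ≠ G ∧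
        Z = {A, B, C, D, E, F, G, H, I} := by
    rcases memXY H hHZ hHA hHB hHC hHD hHE hHF hHG with h | h
    · subst h
      refine ⟨Y, hYZ, Ne.symm hXY, hYA, hYB, hYC, hYD, hYE, hYF, hYG, ?_⟩
      rw [hZeq']
      simp only [Set.insert_union, Set.singleton_union]
    · subst h
      refine ⟨X, hXZ, hXY, hXA, hXB, hXC, hXD, hXE, hXF, hXG, ?_⟩
      rw [hZeq', Set.pair_comm X H]
      simp only [Set.insert_union, Set.singleton_union]
  have hnABH : ¬Collinear3 A B H := fun h =>
    noncol A B C H hA hB hC hHZ hAB hCA hCB hHA hHB hHC colABC h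
  have hnADH : ¬Collinear3 A D H := fun h =>
    noncol A D E H hA hD hE hHZ (Ne.symm hDA) hEA hED hHA hHD hHE colADE h
  have hnBDH : ¬Collinear3 B D H := fun h =>
    noncol B D F H hB hD hF hHZ (Ne.symm hDB) hFB hFD hHB hHD hHF colBDF h
  have memI : ∀ W, W ∈ Z → W ≠ A → W ≠ B → W ≠ C → W ≠ D → W ≠ E → W ≠ F → W ≠ G → W ≠ H →
      W = I := by
    intro W hW n1 n2 n3 n4 n5 n6 n7 n8
    rw [hZeq] at hW
    simp only [Set.mem_insert_iff, Set.mem_singleton_iff] at hW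
    rcases hW with h | h | h | h | h | h | h | h | h
    exacts [absurd h n1, absurd h n2, absurd h n3, absurd h n4, absurd h n5, absurd h n6,
      absurd h n7, absurd h n8, h]
  obtain ⟨T, hTZ, hTD, hTH, colDHT, _⟩ := tex hD hHZ (Ne.symm hHD)
  have hTA : T ≠ A := by
    intro h; rw [h] at colDHT
    exact noncol A D E H hA hD hE hHZ (Ne.symm hDA) hEA hED hHA hHD hHE colADE
      (col_swap23 (col_swap13 colDHT))
  have hTB : T ≠ B := by
    intro h; rw [h] at colDHT
    exact noncol B D F H hB hD hF hHZ (Ne.symm hDB) hFB hFD hHB hHD hHF colBDF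
      (col_swap23 (col_swap13 colDHT))
  have hTC : T ≠ C := by
    intro h; rw [h] at colDHT
    exact noncol C D G H hC hD hG hHZ (Ne.symm hDC) hGC hGD hHC hHD hHG colCDG
      (col_swap23 (col_swap13 colDHT))
  have hTE : T ≠ E := by
    intro h; rw [h] at colDHT
    exact noncol D E A H hD hE hA hHZ (Ne.symm hED) (Ne.symm hDA) (Ne.symm hEA) hHD hHE hHA
      (col_rot colADE) (col_swap23 colDHT)
  have hTF : T ≠ F := by
    intro h; rw [h] at colDHT
    exact noncol D F B H hD hF hB hHZ (Ne.symm hFD) (Ne.symm hDB) (Ne.symm hFB) hHD hHF hHB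
      (col_rot colBDF) (col_swap23 colDHT)
  have hTG : T ≠ G := by
    intro h; rw [h] at colDHT
    exact noncol D G C H hD hG hC hHZ (Ne.symm hGD) (Ne.symm hDC) (Ne.symm hGC) hHD hHG hHC
      (col_rot colCDG) (col_swap23 colDHT)
  have hTI : T = I := memI T hTZ hTA hTB hTC hTD hTE hTF hTG hTH
  rw [hTI] at colDHT
  have hnBEG : ¬Collinear3 B E G := by
    intro hBEG
    obtain ⟨S1, hS1Z, hS1B, hS1H, colBHS, _⟩ := tex hB hHZ (Ne.symm hHB)
    have s1A : S1 ≠ A := by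
      intro h; rw [h] at colBHS
      exact hnABH (col_swap23 (col_swap13 colBHS))
    have s1C : S1 ≠ C := by
      intro h; rw [h] at colBHS
      exact noncol B C A H hB hC hA hHZ (Ne.symm hCB) hAB (Ne.symm hCA) hHB hHC hHA
        (col_rot colABC) (col_swap23 colBHS)
    have s1D : S1 ≠ D := by
      intro h; rw [h] at colBHS
      exact hnBDH (col_swap23 colBHS)
    have s1E : S1 ≠ E := by
      intro h; rw [h] at colBHS
      exact noncol B E G H hB hE hG hHZ (Ne.symm hEB) hGB hGE hHB hHE hHG hBEG
        (col_swap23 colBHS)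
    have s1F : S1 ≠ F := by
      intro h; rw [h] at colBHS
      exact noncol B F D H hB hF hD hHZ (Ne.symm hFB) hDB (Ne.symm hFD) hHB hHF hHD
        (col_swap23 colBDF) (col_swap23 colBHS)
    have s1G : S1 ≠ G := by
      intro h; rw [h] at colBHS
      exact noncol B G E H hB hG hE hHZ (Ne.symm hGB) hEB (Ne.symm hGE) hHB hHG hHE
        (col_swap23 hBEG) (col_swap23 colBHS)
    have s1I : S1 = I := memI S1 hS1Z s1A hS1B s1C s1D s1E s1F s1G hS1H
    rw [s1I] at colBHS
    exact noncol H I D B hHZ hIZ hD hB (Ne.symm hIH) (Ne.symm hHD) (Ne.symm hID)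
      (Ne.symm hHB) (Ne.symm hIB) (Ne.symm hDB) (col_rot colDHT) (col_rot colBHS)
  obtain ⟨T9, hT9Z, hT9A, hT9G, colAGT, _⟩ := tex hA hG (Ne.symm hGA)
  have n9B : T9 ≠ B := by
    intro h; rw [h] at colAGT
    exact noncol A B C G hA hB hC hG hAB hCA hCB hGA hGB hGC colABC (col_swap23 colAGT)
  have n9C : T9 ≠ C := by
    intro h; rw [h] at colAGT
    exact noncol A C B G hA hC hB hG (Ne.symm hCA) (Ne.symm hAB) (Ne.symm hCB) hGA hGC hGB
      (col_swap23 colABC) (col_swap23 colAGT)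
  have n9D : T9 ≠ D := by
    intro h; rw [h] at colAGT
    exact noncol A D E G hA hD hE hG (Ne.symm hDA) hEA hED hGA hGD hGE colADE
      (col_swap23 colAGT)
  have n9E : T9 ≠ E := by
    intro h; rw [h] at colAGT
    exact noncol A E D G hA hE hD hG (Ne.symm hEA) hDA (Ne.symm hED) hGA hGE hGD
      (col_swap23 colADE) (col_swap23 colAGT)
  have n9F : T9 ≠ F := by
    intro h; rw [h] at colAGT
    exact hnAFG (col_swap23 colAGT)
  have n9H : T9 ≠ H := by
    intro h; rw [h] at colAGT
    exact noncol A H F G hA hHZ hF hG (Ne.symm hHA) hFA (Ne.symm hHF) hGA (Ne.symm hHG) hGF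
      (col_swap23 colAFH) (col_swap23 colAGT)
  have hT9I : T9 = I := memI T9 hT9Z hT9A n9B n9C n9D n9E n9F hT9G n9H
  rw [hT9I] at colAGT
  obtain ⟨T8, hT8Z, hT8B, hT8G, colBGT, _⟩ := tex hB hG (Ne.symm hGB)
  have n8A : T8 ≠ A := by
    intro h; rw [h] at colBGT
    exact noncol A B C G hA hB hC hG hAB hCA hCB hGA hGB hGC colABC
      (col_swap23 (col_swap13 colBGT))
  have n8C : T8 ≠ C := by
    intro h; rw [h] at colBGT
    exact noncol B C A G hB hC hA hG (Ne.symm hCB) hAB (Ne.symm hCA) hGB hGC hGA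
      (col_rot colABC) (col_swap23 colBGT)
  have n8D : T8 ≠ D := by
    intro h; rw [h] at colBGT
    exact noncol B D F G hB hD hF hG (Ne.symm hDB) hFB hFD hGB hGD hGF colBDF
      (col_swap23 colBGT)
  have n8E : T8 ≠ E := by
    intro h; rw [h] at colBGT
    exact hnBEG (col_swap23 colBGT)
  have n8F : T8 ≠ F := by
    intro h; rw [h] at colBGT
    exact noncol B F D G hB hF hD hG (Ne.symm hFB) hDB (Ne.symm hFD) hGB hGF hGD
      (col_swap23 colBDF) (col_swap23 colBGT)
  have n8I : T8 ≠ I := by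
    intro h; rw [h] at colBGT
    exact noncol G I A B hG hIZ hA hB (Ne.symm hIG) (Ne.symm hGA) (Ne.symm hIA)
      (Ne.symm hGB) (Ne.symm hIB) (Ne.symm hAB) (col_rot colAGT) (col_rot colBGT)
  have hT8H : T8 = H := by
    rw [hZeq] at hT8Z
    simp only [Set.mem_insert_iff, Set.mem_singleton_iff] at hT8Z
    rcases hT8Z with h | h | h | h | h | h | h | h | h
    exacts [absurd h n8A, absurd h hT8B, absurd h n8C, absurd h n8D, absurd h n8E,
      absurd h n8F, absurd h hT8G, h, absurd h n8I]
  rw [hT8H] at colBGT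
  obtain ⟨S2, hS2Z, hS2C, hS2H, colCHS, _⟩ := tex hC hHZ (Ne.symm hHC)
  have s2A : S2 ≠ A := by
    intro h; rw [h] at colCHS
    exact noncol A C B H hA hC hB hHZ (Ne.symm hCA) (Ne.symm hAB) (Ne.symm hCB) hHA hHC hHB
      (col_swap23 colABC) (col_swap23 (col_swap13 colCHS))
  have s2B : S2 ≠ B := by
    intro h; rw [h] at colCHS
    exact noncol B C A H hB hC hA hHZ (Ne.symm hCB) hAB (Ne.symm hCA) hHB hHC hHA
      (col_rot colABC) (col_swap23 (col_swap13 colCHS))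
  have s2D : S2 ≠ D := by
    intro h; rw [h] at colCHS
    exact noncol C D G H hC hD hG hHZ (Ne.symm hDC) hGC hGD hHC hHD hHG colCDG
      (col_swap23 colCHS)
  have s2F : S2 ≠ F := by
    intro h; rw [h] at colCHS
    exact noncol F H A C hF hHZ hA hC (Ne.symm hHF) (Ne.symm hFA) (Ne.symm hHA)
      (Ne.symm hFC) (Ne.symm hHC) hCA (col_rot colAFH) (col_swap13 colCHS)
  have s2G : S2 ≠ G := by
    intro h; rw [h] at colCHS
    exact noncol C G D H hC hG hD hHZ (Ne.symm hGC) hDC (Ne.symm hGD) hHC hHG hHD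
      (col_swap23 colCDG) (col_swap23 colCHS)
  have s2I : S2 ≠ I := by
    intro h; rw [h] at colCHS
    exact noncol H I D C hHZ hIZ hD hC (Ne.symm hIH) (Ne.symm hHD) (Ne.symm hID)
      (Ne.symm hHC) (Ne.symm hIC) (Ne.symm hDC) (col_rot colDHT) (col_rot colCHS)
  have hS2E : S2 = E := by
    rw [hZeq] at hS2Z
    simp only [Set.mem_insert_iff, Set.mem_singleton_iff] at hS2Z
    rcases hS2Z with h | h | h | h | h | h | h | h | h
    exacts [absurd h s2A, absurd h s2B, absurd h hS2C, absurd h s2D, h, absurd h s2F,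
      absurd h s2G, absurd h hS2H, absurd h s2I]
  rw [hS2E] at colCHS
  have colCEH : Collinear3 C E H := col_swap23 colCHS
  obtain ⟨S3, hS3Z, hS3B, hS3E, colBES, _⟩ := tex hB hE (Ne.symm hEB)
  have s3A : S3 ≠ A := by
    intro h; rw [h] at colBES
    exact noncol A B C E hA hB hC hE hAB hCA hCB hEA hEB hEC colABC
      (col_swap23 (col_swap13 colBES))
  have s3C : S3 ≠ C := by
    intro h; rw [h] at colBES
    exact noncol B C A E hB hC hA hE (Ne.symm hCB) hAB (Ne.symm hCA) hEB hEC hEA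
      (col_rot colABC) (col_swap23 colBES)
  have s3D : S3 ≠ D := by
    intro h; rw [h] at colBES
    exact noncol B D F E hB hD hF hE (Ne.symm hDB) hFB hFD hEB hED (Ne.symm hFE) colBDF
      (col_swap23 colBES)
  have s3F : S3 ≠ F := by
    intro h; rw [h] at colBES
    exact noncol B F D E hB hF hD hE (Ne.symm hFB) hDB (Ne.symm hFD) hEB (Ne.symm hFE) hED
      (col_swap23 colBDF) (col_swap23 colBES)
  have s3G : S3 ≠ G := by
    intro h; rw [h] at colBES
    exact hnBEG colBES
  have s3H : S3 ≠ H := by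
    intro h; rw [h] at colBES
    exact noncol B H G E hB hHZ hG hE (Ne.symm hHB) hGB (Ne.symm hHG) hEB (Ne.symm hHE)
      (Ne.symm hGE) (col_swap23 colBGT) (col_swap23 colBES)
  have hS3I : S3 = I := memI S3 hS3Z s3A hS3B s3C s3D hS3E s3F s3G s3H
  rw [hS3I] at colBES
  exact ⟨A, B, C, D, E, F, G, H, I, hZeq, ⟨hnABD, hnABH, hnADH, hnBDH⟩,
    ⟨colABC, colADE, colBDF, colCDG, colDHT, colAFH, colBGT, colAGT, colCEH, colBES⟩,
    hAB, hCA, hCB, Ne.symm hDC, hEA, hED, hFB, hFD, hGC, hGD, hID, Ne.symm hHD,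
    Ne.symm hDA, Ne.symm hDB⟩

lemma span3 {u v w : V3} (hdet : det3 u v w ≠ 0) (x : V3) :
    ∃ p q r : ℂ, x = p • u + q • v + r • w := by
  have hM : IsUnit (Matrix.of ![u, v, w]).det := isUnit_iff_ne_zero.2 hdet
  set g := Matrix.vecMul x (Matrix.of ![u, v, w])⁻¹ with hg
  refine ⟨g 0, g 1, g 2, ?_⟩
  have h1 : Matrix.vecMul g (Matrix.of ![u, v, w]) = x := by
    rw [hg, Matrix.vecMul_vecMul, Matrix.nonsing_inv_mul _ hM, Matrix.vecMul_one]
  rw [← h1, vecMul_of3]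

lemma det3_comb2 (u v : V3) (α β : ℂ) : det3 u v (α • u + β • v) = 0 := by
  simp only [det3_expand, Pi.add_apply, Pi.smul_apply, smul_eq_mul]
  ring

lemma det3_smul3 (u v w : V3) (p q r : ℂ) :
    det3 (p • u) (q • v) (r • w) = p * q * r * det3 u v w := by
  simp only [det3_expand, Pi.smul_apply, smul_eq_mul]
  ring

lemma comb_ne_zero {u v w : V3} (hdet : det3 u v w ≠ 0) {x y z : ℂ}
    (h : ¬(x = 0 ∧ y = 0 ∧ z = 0)) : x • u + y • v + z • w ≠ 0 :=
  fun h0 => h (uniq3' hdet h0)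

lemma mk_congr {u v : V3} (h : u = v) {hu : u ≠ 0} {hv : v ≠ 0} :
    Projectivization.mk ℂ u hu = Projectivization.mk ℂ v hv := by
  subst h; rfl

lemma col_to_det {X Y W : P2} {u v w : V3} {hu : u ≠ 0} {hv : v ≠ 0} {hw : w ≠ 0}
    (hX : Projectivization.mk ℂ u hu = X) (hY : Projectivization.mk ℂ v hv = Y)
    (hW : Projectivization.mk ℂ w hw = W) (h : Collinear3 X Y W) : det3 u v w = 0 :=
  (collinear_mk_iff hu hv hw).1 (by rw [hX, hY, hW]; exact h)

lemma constraint {u v w : V3} (hdet : det3 u v w ≠ 0) {x0 y0 z0 x1 y1 z1 x2 y2 z2 : ℂ}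
    (h : det3 (x0 • u + y0 • v + z0 • w) (x1 • u + y1 • v + z1 • w) (x2 • u + y2 • v + z2 • w) = 0) :
    x0 * (y1 * z2 - z1 * y2) - y0 * (x1 * z2 - z1 * x2) + z0 * (x1 * y2 - y1 * x2) = 0 := by
  rw [det3_comb] at h
  exact (mul_eq_zero.1 h).resolve_right hdet

lemma coords (Z : Set P2) (hcard : Z.ncard = 9)
    (h3 : ∀ S : Set P2, IsLine S → 2 ≤ (Z ∩ S).ncard → (Z ∩ S).ncard = 3) :
    ∃ (c : ℂ) (g : (Fin 3 → ℂ) ≃ₗ[ℂ] (Fin 3 → ℂ)), c * c - c + 1 = 0 ∧ c ≠ 0 ∧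
      Z = Projectivization.map (g : (Fin 3 → ℂ) →ₗ[ℂ] (Fin 3 → ℂ)) g.injective ''
        ({pt ![1, 0, 0] (by intro h; simpa using congrFun h 0),
          pt ![0, 1, 0] (by intro h; simpa using congrFun h 1),
          pt ![1, c, 0] (by intro h; simpa using congrFun h 0),
          pt ![0, 0, 1] (by intro h; simpa using congrFun h 2),
          pt ![1, 1, c⁻¹] (by intro h; simpa using congrFun h 0),
          pt ![1, 1, 1] (by intro h; simpa using congrFun h 0),
          pt ![1, 0, c⁻¹] (by intro h; simpa using congrFun h 0),
          pt ![1, c, 1] (by intro h; simpa using congrFun h 0),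
          pt ![0, 1, 1] (by intro h; simpa using congrFun h 1)} : Set P2) := by
  obtain ⟨A, B, C, D, E, F, G, H, I, hZeq, ⟨hnABD, hnABH, hnADH, hnBDH⟩,
    ⟨colABC, colADE, colBDF, colCDG, colDHI, colAFH, colBGH, colAGI, colCEH, colBEI⟩,
    hAB, hCA, hCB, hCD, hEA, hED, hFB, hFD, hGC, hGD, hID, hDH, hAD, hBD⟩ :=
    build Z hcard h3
  have hdet0 : det3 A.rep B.rep D.rep ≠ 0 :=
    fun h => hnABD ((collinear_iff_det_rep A B D).2 h)
  obtain ⟨p, q, r, hH0⟩ := span3 hdet0 H.rep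
  have hp : p ≠ 0 := by
    intro h0
    rw [h0, zero_smul, zero_add] at hH0
    apply hnBDH
    rw [collinear_iff_det_rep, hH0]
    exact det3_comb2 _ _ _ _
  have hq : q ≠ 0 := by
    intro h0
    rw [h0, zero_smul, add_zero] at hH0
    apply hnADH
    rw [collinear_iff_det_rep, hH0]
    exact det3_comb2 _ _ _ _
  have hr : r ≠ 0 := by
    intro h0
    rw [h0, zero_smul, add_zero] at hH0
    apply hnABH
    rw [collinear_iff_det_rep, hH0]
    exact det3_comb2 _ _ _ _
  set a := p • A.rep with hadef
  set b := q • B.rep with hbdef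
  set d := r • D.rep with hddef
  have hane : a ≠ 0 := smul_ne_zero hp (Projectivization.rep_nonzero A)
  have hbne : b ≠ 0 := smul_ne_zero hq (Projectivization.rep_nonzero B)
  have hdne : d ≠ 0 := smul_ne_zero hr (Projectivization.rep_nonzero D)
  have hdet : det3 a b d ≠ 0 := by
    rw [hadef, hbdef, hddef, det3_smul3]
    exact mul_ne_zero (mul_ne_zero (mul_ne_zero hp hq) hr) hdet0
  have hmkA : Projectivization.mk ℂ a hane = A := by
    have h1 : A.rep = p⁻¹ • a := by rw [hadef, smul_smul, inv_mul_cancel₀ hp, one_smul]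
    exact (eq_of_rep_smul hane h1).symm
  have hmkB : Projectivization.mk ℂ b hbne = B := by
    have h1 : B.rep = q⁻¹ • b := by rw [hbdef, smul_smul, inv_mul_cancel₀ hq, one_smul]
    exact (eq_of_rep_smul hbne h1).symm
  have hmkD : Projectivization.mk ℂ d hdne = D := by
    have h1 : D.rep = r⁻¹ • d := by rw [hddef, smul_smul, inv_mul_cancel₀ hr, one_smul]
    exact (eq_of_rep_smul hdne h1).symm
  have hHne : a + b + d ≠ 0 := by
    have h1 := comb_ne_zero hdet (x := 1) (y := 1) (z := 1) (fun h => one_ne_zero h.1)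
    simpa using h1
  have hmkH : Projectivization.mk ℂ (a + b + d) hHne = H := by
    have h1 : H.rep = (1 : ℂ) • (a + b + d) := by rw [one_smul]; exact hH0
    exact (eq_of_rep_smul hHne h1).symm
  -- C
  have hdC : det3 a b C.rep = 0 := col_to_det hmkA hmkB (Projectivization.mk_rep C) colABC
  have hneab : Projectivization.mk ℂ a hane ≠ Projectivization.mk ℂ b hbne := by
    rw [hmkA, hmkB]; exact hAB
  obtain ⟨xC, yC, hCrep⟩ := span2 hane hbne hneab hdC
  have hxC : xC ≠ 0 := by
    intro h0; rw [h0, zero_smul, zero_add] at hCrep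
    exact hCB ((eq_of_rep_smul hbne hCrep).trans hmkB)
  have hyC : yC ≠ 0 := by
    intro h0; rw [h0, zero_smul, add_zero] at hCrep
    exact hCA ((eq_of_rep_smul hane hCrep).trans hmkA)
  set c := yC / xC with hcdef
  have hc0 : c ≠ 0 := div_ne_zero hyC hxC
  have hCne : a + c • b ≠ 0 := by
    have h1 := comb_ne_zero hdet (x := 1) (y := c) (z := 0) (fun h => one_ne_zero h.1)
    simpa using h1
  have hCrep' : C.rep = xC • (a + c • b) := by
    rw [hCrep, hcdef]
    funext j
    simp only [Pi.add_apply, Pi.smul_apply, smul_eq_mul]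
    field_simp
  have hmkC : Projectivization.mk ℂ (a + c • b) hCne = C := (eq_of_rep_smul hCne hCrep').symm
  -- E
  have hdE : det3 a d E.rep = 0 := col_to_det hmkA hmkD (Projectivization.mk_rep E) colADE
  have hnead : Projectivization.mk ℂ a hane ≠ Projectivization.mk ℂ d hdne := by
    rw [hmkA, hmkD]; exact hAD
  obtain ⟨xE, zE, hErep⟩ := span2 hane hdne hnead hdE
  have hxE : xE ≠ 0 := by
    intro h0; rw [h0, zero_smul, zero_add] at hErep
    exact hED ((eq_of_rep_smul hdne hErep).trans hmkD)
  have hzE : zE ≠ 0 := by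
    intro h0; rw [h0, zero_smul, add_zero] at hErep
    exact hEA ((eq_of_rep_smul hane hErep).trans hmkA)
  set e := zE / xE with hedef
  have hEne : a + e • d ≠ 0 := by
    have h1 := comb_ne_zero hdet (x := 1) (y := 0) (z := e) (fun h => one_ne_zero h.1)
    simpa using h1
  have hErep' : E.rep = xE • (a + e • d) := by
    rw [hErep, hedef]
    funext j
    simp only [Pi.add_apply, Pi.smul_apply, smul_eq_mul]
    field_simp
  have hmkE : Projectivization.mk ℂ (a + e • d) hEne = E := (eq_of_rep_smul hEne hErep').symm
  -- F
  have hdF : det3 b d F.rep = 0 := col_to_det hmkB hmkD (Projectivization.mk_rep F) colBDF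
  have hnebd : Projectivization.mk ℂ b hbne ≠ Projectivization.mk ℂ d hdne := by
    rw [hmkB, hmkD]; exact hBD
  obtain ⟨xF, zF, hFrep⟩ := span2 hbne hdne hnebd hdF
  have hxF : xF ≠ 0 := by
    intro h0; rw [h0, zero_smul, zero_add] at hFrep
    exact hFD ((eq_of_rep_smul hdne hFrep).trans hmkD)
  have hzF : zF ≠ 0 := by
    intro h0; rw [h0, zero_smul, add_zero] at hFrep
    exact hFB ((eq_of_rep_smul hbne hFrep).trans hmkB)
  set f := zF / xF with hfdef
  have hFne : b + f • d ≠ 0 := by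
    have h1 := comb_ne_zero hdet (x := 0) (y := 1) (z := f) (fun h => one_ne_zero h.2.1)
    simpa using h1
  have hFrep' : F.rep = xF • (b + f • d) := by
    rw [hFrep, hfdef]
    funext j
    simp only [Pi.add_apply, Pi.smul_apply, smul_eq_mul]
    field_simp
  have hmkF : Projectivization.mk ℂ (b + f • d) hFne = F := (eq_of_rep_smul hFne hFrep').symm
  -- constraint AFH : f = 1
  have hdAFH : det3 a (b + f • d) (a + b + d) = 0 := col_to_det hmkA hmkF hmkH colAFH
  have hdAFH' : det3 ((1:ℂ) • a + (0:ℂ) • b + (0:ℂ) • d) ((0:ℂ) • a + (1:ℂ) • b + f • d)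
      ((1:ℂ) • a + (1:ℂ) • b + (1:ℂ) • d) = 0 := by
    rw [show (1:ℂ) • a + (0:ℂ) • b + (0:ℂ) • d = a by module,
      show (0:ℂ) • a + (1:ℂ) • b + f • d = b + f • d by module,
      show (1:ℂ) • a + (1:ℂ) • b + (1:ℂ) • d = a + b + d by module]
    exact hdAFH
  have hf1 := constraint hdet hdAFH'
  have hf : f = 1 := by linear_combination -hf1
  have hbdne : b + d ≠ 0 := by
    have h1 := comb_ne_zero hdet (x := 0) (y := 1) (z := 1) (fun h => one_ne_zero h.2.1)
    simpa using h1
  have hmkF1 : Projectivization.mk ℂ (b + d) hbdne = F :=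
    (mk_congr (show b + d = b + f • d by rw [hf, one_smul])).trans hmkF
  -- G
  have hdG : det3 (a + c • b) d G.rep = 0 := col_to_det hmkC hmkD (Projectivization.mk_rep G) colCDG
  have hnecd : Projectivization.mk ℂ (a + c • b) hCne ≠ Projectivization.mk ℂ d hdne := by
    rw [hmkC, hmkD]; exact hCD
  obtain ⟨xG, zG, hGrep⟩ := span2 hCne hdne hnecd hdG
  have hxG : xG ≠ 0 := by
    intro h0; rw [h0, zero_smul, zero_add] at hGrep
    exact hGD ((eq_of_rep_smul hdne hGrep).trans hmkD)
  have hzG : zG ≠ 0 := by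
    intro h0; rw [h0, zero_smul, add_zero] at hGrep
    exact hGC ((eq_of_rep_smul hCne hGrep).trans hmkC)
  set g1 := zG / xG with hg1def
  have hGne0 : (a + c • b) + g1 • d ≠ 0 := by
    have h1 := comb_ne_zero hdet (x := 1) (y := c) (z := g1) (fun h => one_ne_zero h.1)
    have h2 : (a + c • b) + g1 • d = (1:ℂ) • a + c • b + g1 • d := by module
    rw [h2]; exact h1
  have hGrep' : G.rep = xG • ((a + c • b) + g1 • d) := by
    rw [hGrep, hg1def]
    funext j
    simp only [Pi.add_apply, Pi.smul_apply, smul_eq_mul]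
    field_simp
  have hmkG0 : Projectivization.mk ℂ ((a + c • b) + g1 • d) hGne0 = G :=
    (eq_of_rep_smul hGne0 hGrep').symm
  -- constraint BGH : g1 = 1
  have hdBGH : det3 b ((a + c • b) + g1 • d) (a + b + d) = 0 :=
    col_to_det hmkB hmkG0 hmkH colBGH
  have hdBGH' : det3 ((0:ℂ) • a + (1:ℂ) • b + (0:ℂ) • d) ((1:ℂ) • a + c • b + g1 • d)
      ((1:ℂ) • a + (1:ℂ) • b + (1:ℂ) • d) = 0 := by
    rw [show (0:ℂ) • a + (1:ℂ) • b + (0:ℂ) • d = b by module,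
      show (1:ℂ) • a + c • b + g1 • d = (a + c • b) + g1 • d by module,
      show (1:ℂ) • a + (1:ℂ) • b + (1:ℂ) • d = a + b + d by module]
    exact hdBGH
  have hg1eq := constraint hdet hdBGH'
  have hg1 : g1 = 1 := by linear_combination hg1eq
  have hGne : a + c • b + d ≠ 0 := by
    have h1 := comb_ne_zero hdet (x := 1) (y := c) (z := 1) (fun h => one_ne_zero h.1)
    simpa using h1
  have hmkG : Projectivization.mk ℂ (a + c • b + d) hGne = G :=
    (mk_congr (show a + c • b + d = (a + c • b) + g1 • d by rw [hg1, one_smul, add_assoc])).trans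
      hmkG0
  -- I
  have hdI : det3 d (a + b + d) I.rep = 0 := col_to_det hmkD hmkH (Projectivization.mk_rep I) colDHI
  have hnedh : Projectivization.mk ℂ d hdne ≠ Projectivization.mk ℂ (a + b + d) hHne := by
    rw [hmkD, hmkH]; exact hDH
  obtain ⟨xI, yI, hIrep⟩ := span2 hdne hHne hnedh hdI
  have hyI : yI ≠ 0 := by
    intro h0; rw [h0, zero_smul, add_zero] at hIrep
    exact hID ((eq_of_rep_smul hdne hIrep).trans hmkD)
  set i := (xI + yI) / yI with hidef
  have hIne : a + b + i • d ≠ 0 := by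
    have h1 := comb_ne_zero hdet (x := 1) (y := 1) (z := i) (fun h => one_ne_zero h.1)
    simpa using h1
  have hIrep' : I.rep = yI • (a + b + i • d) := by
    rw [hIrep]
    funext j
    simp only [Pi.add_apply, Pi.smul_apply, smul_eq_mul, hidef]
    field_simp
    ring
  have hmkI : Projectivization.mk ℂ (a + b + i • d) hIne = I := (eq_of_rep_smul hIne hIrep').symm
  -- constraints AGI, CEH, BEI
  have hdAGI : det3 a (a + c • b + d) (a + b + i • d) = 0 := col_to_det hmkA hmkG hmkI colAGI
  have hdAGI' : det3 ((1:ℂ) • a + (0:ℂ) • b + (0:ℂ) • d) ((1:ℂ) • a + c • b + (1:ℂ) • d)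
      ((1:ℂ) • a + (1:ℂ) • b + i • d) = 0 := by
    rw [show (1:ℂ) • a + (0:ℂ) • b + (0:ℂ) • d = a by module,
      show (1:ℂ) • a + c • b + (1:ℂ) • d = a + c • b + d by module,
      show (1:ℂ) • a + (1:ℂ) • b + i • d = a + b + i • d by module]
    exact hdAGI
  have q1' := constraint hdet hdAGI'
  have q1 : c * i = 1 := by linear_combination q1'
  have hdCEH : det3 (a + c • b) (a + e • d) (a + b + d) = 0 := col_to_det hmkC hmkE hmkH colCEH
  have hdCEH' : det3 ((1:ℂ) • a + c • b + (0:ℂ) • d) ((1:ℂ) • a + (0:ℂ) • b + e • d)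
      ((1:ℂ) • a + (1:ℂ) • b + (1:ℂ) • d) = 0 := by
    rw [show (1:ℂ) • a + c • b + (0:ℂ) • d = a + c • b by module,
      show (1:ℂ) • a + (0:ℂ) • b + e • d = a + e • d by module,
      show (1:ℂ) • a + (1:ℂ) • b + (1:ℂ) • d = a + b + d by module]
    exact hdCEH
  have q2' := constraint hdet hdCEH'
  have q2 : e + c - c * e = 0 := by linear_combination -q2'
  have hdBEI : det3 b (a + e • d) (a + b + i • d) = 0 := col_to_det hmkB hmkE hmkI colBEI
  have hdBEI' : det3 ((0:ℂ) • a + (1:ℂ) • b + (0:ℂ) • d) ((1:ℂ) • a + (0:ℂ) • b + e • d)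
      ((1:ℂ) • a + (1:ℂ) • b + i • d) = 0 := by
    rw [show (0:ℂ) • a + (1:ℂ) • b + (0:ℂ) • d = b by module,
      show (1:ℂ) • a + (0:ℂ) • b + e • d = a + e • d by module,
      show (1:ℂ) • a + (1:ℂ) • b + i • d = a + b + i • d by module]
    exact hdBEI
  have q3' := constraint hdet hdBEI'
  have q3 : i = e := by linear_combination -q3'
  have hce : c * e = 1 := by rw [← q3]; exact q1
  have he1 : e = 1 - c := by linear_combination q2 + hce
  have hc2 : c * c - c + 1 = 0 := by linear_combination (-1 : ℂ) * hce + c * he1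
  have hie : i = c⁻¹ := by field_simp; linear_combination q1
  have hee : e = c⁻¹ := by field_simp; linear_combination hce
  have hEne2 : a + c⁻¹ • d ≠ 0 := by
    have h1 := comb_ne_zero hdet (x := 1) (y := 0) (z := c⁻¹) (fun h => one_ne_zero h.1)
    simpa using h1
  have hmkE2 : Projectivization.mk ℂ (a + c⁻¹ • d) hEne2 = E :=
    (mk_congr (show a + c⁻¹ • d = a + e • d by rw [hee])).trans hmkE
  have hIne2 : a + b + c⁻¹ • d ≠ 0 := by
    have h1 := comb_ne_zero hdet (x := 1) (y := 1) (z := c⁻¹) (fun h => one_ne_zero h.1)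
    simpa using h1
  have hmkI2 : Projectivization.mk ℂ (a + b + c⁻¹ • d) hIne2 = I :=
    (mk_congr (show a + b + c⁻¹ • d = a + b + i • d by rw [hie])).trans hmkI
  -- the linear equivalence
  set M : Matrix (Fin 3) (Fin 3) ℂ := Matrix.transpose (Matrix.of ![a, b, d]) with hMdef
  have hMdet : IsUnit M.det := by
    rw [hMdef, Matrix.det_transpose]
    exact isUnit_iff_ne_zero.2 hdet
  have hMinv : Invertible M := M.invertibleOfIsUnitDet hMdet
  set geq := M.toLinearEquiv' hMinv with hgeqdef
  have happ : ∀ x : V3, (geq : V3 →ₗ[ℂ] V3) x = x 0 • a + x 1 • b + x 2 • d := by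
    intro x
    have h1 : (geq : V3 →ₗ[ℂ] V3) x = M.mulVec x := rfl
    rw [h1, hMdef]
    funext j
    simp [Matrix.mulVec, dotProduct, Fin.sum_univ_three, Matrix.transpose_apply]
    ring
  refine ⟨c, geq, hc2, hc0, ?_⟩
  have key : ∀ (v : V3) (hv : v ≠ 0) (X : P2) (w : V3) (hw : w ≠ 0),
      Projectivization.mk ℂ w hw = X → (geq : V3 →ₗ[ℂ] V3) v = w →
      Projectivization.map (geq : V3 →ₗ[ℂ] V3) geq.injective (Projectivization.mk ℂ v hv) = X := by
    intro v hv X w hw hmk hgv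
    rw [Projectivization.map_mk, ← hmk]
    exact mk_congr hgv
  have mA := key ![1, 0, 0] (by intro h; simpa using congrFun h 0) A a hane hmkA
    (by rw [happ]; simp)
  have mB := key ![0, 1, 0] (by intro h; simpa using congrFun h 1) B b hbne hmkB
    (by rw [happ]; simp)
  have mC := key ![1, c, 0] (by intro h; simpa using congrFun h 0) C (a + c • b) hCne hmkC
    (by rw [happ]; simp)
  have mD := key ![0, 0, 1] (by intro h; simpa using congrFun h 2) D d hdne hmkD
    (by rw [happ]; simp)
  have mI := key ![1, 1, c⁻¹] (by intro h; simpa using congrFun h 0) I (a + b + c⁻¹ • d) hIne2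
    hmkI2 (by rw [happ]; simp)
  have mH := key ![1, 1, 1] (by intro h; simpa using congrFun h 0) H (a + b + d) hHne hmkH
    (by rw [happ]; simp)
  have mE := key ![1, 0, c⁻¹] (by intro h; simpa using congrFun h 0) E (a + c⁻¹ • d) hEne2
    hmkE2 (by rw [happ]; simp [add_assoc])
  have mG := key ![1, c, 1] (by intro h; simpa using congrFun h 0) G (a + c • b + d) hGne hmkG
    (by rw [happ]; simp)
  have mF := key ![0, 1, 1] (by intro h; simpa using congrFun h 1) F (b + d) hbdne hmkF1
    (by rw [happ]; simp)
  have himg : Projectivization.map (geq : V3 →ₗ[ℂ] V3) geq.injective ''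
      ({pt ![1, 0, 0] (by intro h; simpa using congrFun h 0),
        pt ![0, 1, 0] (by intro h; simpa using congrFun h 1),
        pt ![1, c, 0] (by intro h; simpa using congrFun h 0),
        pt ![0, 0, 1] (by intro h; simpa using congrFun h 2),
        pt ![1, 1, c⁻¹] (by intro h; simpa using congrFun h 0),
        pt ![1, 1, 1] (by intro h; simpa using congrFun h 0),
        pt ![1, 0, c⁻¹] (by intro h; simpa using congrFun h 0),
        pt ![1, c, 1] (by intro h; simpa using congrFun h 0),
        pt ![0, 1, 1] (by intro h; simpa using congrFun h 1)} : Set P2) =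
      {A, B, C, D, I, H, E, G, F} := by
    simp only [pt, Set.image_insert_eq, Set.image_singleton]
    rw [mA, mB, mC, mD, mI, mH, mE, mG, mF]
  rw [hZeq, himg]
  ext x
  simp only [Set.mem_insert_iff, Set.mem_singleton_iff]
  constructor <;> intro hx <;> rcases hx with h | h | h | h | h | h | h | h | h <;> simp [h]

lemma iUnion_fin3 {α : Type*} (f : Fin 3 → Set α) : (⋃ a, f a) = f 0 ∪ f 1 ∪ f 2 := by
  ext x
  simp only [Set.mem_iUnion, Set.mem_union]
  constructor
  · rintro ⟨a, h⟩
    fin_cases a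
    exacts [Or.inl (Or.inl h), Or.inl (Or.inr h), Or.inr h]
  · rintro ((h | h) | h)
    exacts [⟨0, h⟩, ⟨1, h⟩, ⟨2, h⟩]

lemma F3_explicit (θ : ℂ) : F3 θ =
    ({pt ![1, -1, 0] (by intro h; simpa using congrFun h 0),
      pt ![1, -θ, 0] (by intro h; simpa using congrFun h 0),
      pt ![1, -θ ^ 2, 0] (by intro h; simpa using congrFun h 0),
      pt ![1, 0, -1] (by intro h; simpa using congrFun h 0),
      pt ![1, 0, -θ] (by intro h; simpa using congrFun h 0),
      pt ![1, 0, -θ ^ 2] (by intro h; simpa using congrFun h 0),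
      pt ![0, 1, -1] (by intro h; simpa using congrFun h 1),
      pt ![0, 1, -θ] (by intro h; simpa using congrFun h 1),
      pt ![0, 1, -θ ^ 2] (by intro h; simpa using congrFun h 1)} : Set P2) := by
  rw [F3, iUnion_fin3]
  rw [show pt ![1, -θ ^ ((0 : Fin 3) : ℕ), 0] (by intro h; simpa using congrFun h 0) =
      pt ![1, -1, 0] (by intro h; simpa using congrFun h 0) from mk_congr (by norm_num),
    show pt ![1, 0, -θ ^ ((0 : Fin 3) : ℕ)] (by intro h; simpa using congrFun h 0) =
      pt ![1, 0, -1] (by intro h; simpa using congrFun h 0) from mk_congr (by norm_num),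
    show pt ![0, 1, -θ ^ ((0 : Fin 3) : ℕ)] (by intro h; simpa using congrFun h 1) =
      pt ![0, 1, -1] (by intro h; simpa using congrFun h 1) from mk_congr (by norm_num),
    show pt ![1, -θ ^ ((1 : Fin 3) : ℕ), 0] (by intro h; simpa using congrFun h 0) =
      pt ![1, -θ, 0] (by intro h; simpa using congrFun h 0) from mk_congr (by norm_num),
    show pt ![1, 0, -θ ^ ((1 : Fin 3) : ℕ)] (by intro h; simpa using congrFun h 0) =
      pt ![1, 0, -θ] (by intro h; simpa using congrFun h 0) from mk_congr (by norm_num),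
    show pt ![0, 1, -θ ^ ((1 : Fin 3) : ℕ)] (by intro h; simpa using congrFun h 1) =
      pt ![0, 1, -θ] (by intro h; simpa using congrFun h 1) from mk_congr (by norm_num),
    show pt ![1, -θ ^ ((2 : Fin 3) : ℕ), 0] (by intro h; simpa using congrFun h 0) =
      pt ![1, -θ ^ 2, 0] (by intro h; simpa using congrFun h 0) from mk_congr (by norm_num),
    show pt ![1, 0, -θ ^ ((2 : Fin 3) : ℕ)] (by intro h; simpa using congrFun h 0) =
      pt ![1, 0, -θ ^ 2] (by intro h; simpa using congrFun h 0) from mk_congr (by norm_num),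
    show pt ![0, 1, -θ ^ ((2 : Fin 3) : ℕ)] (by intro h; simpa using congrFun h 1) =
      pt ![0, 1, -θ ^ 2] (by intro h; simpa using congrFun h 1) from mk_congr (by norm_num)]
  ext x
  simp only [Set.mem_union, Set.mem_insert_iff, Set.mem_singleton_iff]
  constructor
  · intro hx
    rcases hx with ((h | h | h) | (h | h | h)) | (h | h | h) <;> simp [h]
  · intro hx
    rcases hx with h | h | h | h | h | h | h | h | h <;> simp [h]

lemma F3_swap (ω : ℂ) (hω : IsPrimitiveRoot ω 3) : F3 (ω ^ 2) = F3 ω := by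
  have hω3 : ω ^ 3 = 1 := hω.pow_eq_one
  have h4 : (ω ^ 2) ^ 2 = ω := by linear_combination ω * hω3
  rw [F3_explicit, F3_explicit]
  rw [show pt ![1, -(ω ^ 2) ^ 2, 0] (by intro h; simpa using congrFun h 0) =
      pt ![1, -ω, 0] (by intro h; simpa using congrFun h 0) from mk_congr (by rw [h4]),
    show pt ![1, 0, -(ω ^ 2) ^ 2] (by intro h; simpa using congrFun h 0) =
      pt ![1, 0, -ω] (by intro h; simpa using congrFun h 0) from mk_congr (by rw [h4]),
    show pt ![0, 1, -(ω ^ 2) ^ 2] (by intro h; simpa using congrFun h 1) =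
      pt ![0, 1, -ω] (by intro h; simpa using congrFun h 1) from mk_congr (by rw [h4])]
  ext x
  simp only [Set.mem_insert_iff, Set.mem_singleton_iff]
  constructor <;> intro hx <;> rcases hx with h | h | h | h | h | h | h | h | h <;> simp [h]

lemma finish (θ : ℂ) (hθ : IsPrimitiveRoot θ 3) (Z : Set P2) (c : ℂ) (hcval : c = -θ ^ 2)
    (g : (Fin 3 → ℂ) ≃ₗ[ℂ] (Fin 3 → ℂ))
    (hZ : Z = Projectivization.map (g : (Fin 3 → ℂ) →ₗ[ℂ] (Fin 3 → ℂ)) g.injective ''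
      ({pt ![1, 0, 0] (by intro h; simpa using congrFun h 0),
        pt ![0, 1, 0] (by intro h; simpa using congrFun h 1),
        pt ![1, c, 0] (by intro h; simpa using congrFun h 0),
        pt ![0, 0, 1] (by intro h; simpa using congrFun h 2),
        pt ![1, 1, c⁻¹] (by intro h; simpa using congrFun h 0),
        pt ![1, 1, 1] (by intro h; simpa using congrFun h 0),
        pt ![1, 0, c⁻¹] (by intro h; simpa using congrFun h 0),
        pt ![1, c, 1] (by intro h; simpa using congrFun h 0),
        pt ![0, 1, 1] (by intro h; simpa using congrFun h 1)} : Set P2)) :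
    ProjEquiv (F3 θ) Z := by
  have hθ3 : θ ^ 3 = 1 := hθ.pow_eq_one
  have hθ1 : θ ≠ 1 := hθ.ne_one (by norm_num)
  have hθ0 : θ ≠ 0 := hθ.ne_zero (by norm_num)
  have hsum : θ ^ 2 + θ + 1 = 0 := by
    have h0 : (θ - 1) * (θ ^ 2 + θ + 1) = 0 := by linear_combination hθ3
    exact (mul_eq_zero.1 h0).resolve_left (sub_ne_zero.2 hθ1)
  have hθ2 : θ ^ 2 ≠ 1 := by
    intro h
    apply hθ1
    calc θ = θ ^ 3 * θ := by rw [hθ3, one_mul]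
    _ = θ ^ 2 * θ ^ 2 := by ring
    _ = 1 := by rw [h, one_mul]
  have hcinv : c⁻¹ = -θ := by
    rw [hcval]
    exact inv_eq_of_mul_eq_one_left (by linear_combination hθ3)
  set N : Matrix (Fin 3) (Fin 3) ℂ :=
    Matrix.transpose (Matrix.of ![![1, -1, 0], ![-θ ^ 2, 1, 0], ![θ ^ 2, 0, -θ ^ 2]]) with hNdef
  have hNdet : IsUnit N.det := by
    rw [hNdef, Matrix.det_transpose]
    have h1 : (Matrix.of ![![1, -1, 0], ![-θ ^ 2, 1, 0], ![θ ^ 2, 0, -θ ^ 2]]).det =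
        θ ^ 2 * (θ ^ 2 - 1) := by
      rw [show (Matrix.of ![![1, -1, 0], ![-θ ^ 2, 1, 0], ![θ ^ 2, 0, -θ ^ 2]]).det =
        det3 ![1, -1, 0] ![-θ ^ 2, 1, 0] ![θ ^ 2, 0, -θ ^ 2] from rfl, det3_expand]
      norm_num [Matrix.cons_val_two]
      ring
    rw [h1]
    exact isUnit_iff_ne_zero.2 (mul_ne_zero (pow_ne_zero 2 hθ0) (sub_ne_zero.2 hθ2))
  have hNinv : Invertible N := N.invertibleOfIsUnitDet hNdet
  set μ := N.toLinearEquiv' hNinv with hμdef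
  have happ : ∀ x : V3, (μ : V3 →ₗ[ℂ] V3) x =
      x 0 • ![1, -1, 0] + x 1 • ![-θ ^ 2, 1, 0] + x 2 • ![θ ^ 2, 0, -θ ^ 2] := by
    intro x
    have h1 : (μ : V3 →ₗ[ℂ] V3) x = N.mulVec x := rfl
    rw [h1, hNdef]
    funext j
    fin_cases j <;>
      simp [Matrix.mulVec, dotProduct, Fin.sum_univ_three, Matrix.transpose_apply] <;>
      ring
  have key : ∀ (v : V3) (hv : v ≠ 0) (w : V3) (hw : w ≠ 0) (k : ℂ), k ≠ 0 →
      ((μ : V3 →ₗ[ℂ] V3) v = k • w) →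
      Projectivization.map (μ : V3 →ₗ[ℂ] V3) μ.injective (Projectivization.mk ℂ v hv) =
        Projectivization.mk ℂ w hw := by
    intro v hv w hw k hk h
    rw [Projectivization.map_mk]
    exact (mk_congr h).trans (mk_smul_eq hw hk)
  have mA := key ![1, 0, 0] (by intro h; simpa using congrFun h 0)
    ![1, -1, 0] (by intro h; simpa using congrFun h 0) 1 one_ne_zero
    (by rw [happ]; funext j; fin_cases j <;> simp)
  have mB := key ![0, 1, 0] (by intro h; simpa using congrFun h 1)
    ![1, -θ, 0] (by intro h; simpa using congrFun h 0) (-θ ^ 2) (by simpa using pow_ne_zero 2 hθ0)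
    (by rw [happ]; funext j; fin_cases j <;> simp <;> (first | ring1 | linear_combination hθ3 | linear_combination -hθ3 | linear_combination hsum | linear_combination -hsum | linear_combination (θ ^ 2 - θ + 1) * hsum | linear_combination -(θ ^ 2 - θ + 1) * hsum))
  have mC := key ![1, c, 0] (by intro h; simpa using congrFun h 0)
    ![1, -θ ^ 2, 0] (by intro h; simpa using congrFun h 0) (-θ ^ 2)
    (by simpa using pow_ne_zero 2 hθ0)
    (by rw [happ, hcval]; funext j; fin_cases j <;> simp <;> (first | ring1 | linear_combination hθ3 | linear_combination -hθ3 | linear_combination hsum | linear_combination -hsum | linear_combination (θ ^ 2 - θ + 1) * hsum | linear_combination -(θ ^ 2 - θ + 1) * hsum))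
  have mD := key ![0, 0, 1] (by intro h; simpa using congrFun h 2)
    ![1, 0, -1] (by intro h; simpa using congrFun h 0) (θ ^ 2) (pow_ne_zero 2 hθ0)
    (by rw [happ]; funext j; fin_cases j <;> simp)
  have mI := key ![1, 1, c⁻¹] (by intro h; simpa using congrFun h 0)
    ![1, 0, -θ] (by intro h; simpa using congrFun h 0) (-θ ^ 2)
    (by simpa using pow_ne_zero 2 hθ0)
    (by rw [happ, hcinv]; funext j; fin_cases j <;> simp <;> (first | ring1 | linear_combination hθ3 | linear_combination -hθ3 | linear_combination hsum | linear_combination -hsum | linear_combination (θ ^ 2 - θ + 1) * hsum | linear_combination -(θ ^ 2 - θ + 1) * hsum))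
  have mH := key ![1, 1, 1] (by intro h; simpa using congrFun h 0)
    ![1, 0, -θ ^ 2] (by intro h; simpa using congrFun h 0) 1 one_ne_zero
    (by rw [happ]; funext j; fin_cases j <;> simp)
  have mE := key ![1, 0, c⁻¹] (by intro h; simpa using congrFun h 0)
    ![0, 1, -1] (by intro h; simpa using congrFun h 1) (-1) (by norm_num)
    (by rw [happ, hcinv]; funext j; fin_cases j <;> simp <;> (first | ring1 | linear_combination hθ3 | linear_combination -hθ3 | linear_combination hsum | linear_combination -hsum | linear_combination (θ ^ 2 - θ + 1) * hsum | linear_combination -(θ ^ 2 - θ + 1) * hsum))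
  have mG := key ![1, c, 1] (by intro h; simpa using congrFun h 0)
    ![0, 1, -θ] (by intro h; simpa using congrFun h 1) θ hθ0
    (by rw [happ, hcval]; funext j; fin_cases j <;> simp <;> (first | ring1 | linear_combination hθ3 | linear_combination -hθ3 | linear_combination hsum | linear_combination -hsum | linear_combination (θ ^ 2 - θ + 1) * hsum | linear_combination -(θ ^ 2 - θ + 1) * hsum))
  have mF := key ![0, 1, 1] (by intro h; simpa using congrFun h 1)
    ![0, 1, -θ ^ 2] (by intro h; simpa using congrFun h 1) 1 one_ne_zero
    (by rw [happ]; funext j; fin_cases j <;> simp)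
  have himg2 : Projectivization.map (μ : V3 →ₗ[ℂ] V3) μ.injective ''
      ({pt ![1, 0, 0] (by intro h; simpa using congrFun h 0),
        pt ![0, 1, 0] (by intro h; simpa using congrFun h 1),
        pt ![1, c, 0] (by intro h; simpa using congrFun h 0),
        pt ![0, 0, 1] (by intro h; simpa using congrFun h 2),
        pt ![1, 1, c⁻¹] (by intro h; simpa using congrFun h 0),
        pt ![1, 1, 1] (by intro h; simpa using congrFun h 0),
        pt ![1, 0, c⁻¹] (by intro h; simpa using congrFun h 0),
        pt ![1, c, 1] (by intro h; simpa using congrFun h 0),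
        pt ![0, 1, 1] (by intro h; simpa using congrFun h 1)} : Set P2) = F3 θ := by
    rw [F3_explicit]
    simp only [pt, Set.image_insert_eq, Set.image_singleton]
    rw [mA, mB, mC, mD, mI, mH, mE, mG, mF]
  refine ⟨μ.symm.trans g, ?_⟩
  rw [← himg2, ← Set.image_comp]
  have hcomp : (Projectivization.map ((μ.symm.trans g : (Fin 3 → ℂ) ≃ₗ[ℂ] (Fin 3 → ℂ)) :
        (Fin 3 → ℂ) →ₗ[ℂ] (Fin 3 → ℂ)) (μ.symm.trans g).injective) ∘
      (Projectivization.map (μ : V3 →ₗ[ℂ] V3) μ.injective) =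
      Projectivization.map (g : (Fin 3 → ℂ) →ₗ[ℂ] (Fin 3 → ℂ)) g.injective := by
    funext x
    induction x using Projectivization.ind with
    | h v hv =>
      simp only [Function.comp_apply, Projectivization.map_mk]
      exact mk_congr (by simp)
  rw [hcomp]
  exact hZ

end StmtAux

theorem stmt3' (ω : ℂ) (hω : IsPrimitiveRoot ω 3)
    (Z : Set P2) (hcard : Z.ncard = 9)
    (h3 : ∀ S : Set P2, IsLine S → 2 ≤ (Z ∩ S).ncard → (Z ∩ S).ncard = 3) :
    ProjEquiv (F3 ω) Z := by
  obtain ⟨c, g, hc2, hc0, hZimg⟩ := StmtAux.coords Z hcard h3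
  have hω3 : ω ^ 3 = 1 := hω.pow_eq_one
  have hω1 : ω ≠ 1 := hω.ne_one (by norm_num)
  have hsum : ω ^ 2 + ω + 1 = 0 := by
    have h0 : (ω - 1) * (ω ^ 2 + ω + 1) = 0 := by linear_combination hω3
    exact (mul_eq_zero.1 h0).resolve_left (sub_ne_zero.2 hω1)
  have hsplit : (c + ω) * (c + ω ^ 2) = 0 := by linear_combination hc2 + c * hsum + hω3
  rcases mul_eq_zero.1 hsplit with h | h
  · have hθ : IsPrimitiveRoot (ω ^ 2) 3 := hω.pow_of_coprime 2 (by norm_num)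
    have hcval : c = -(ω ^ 2) ^ 2 := by linear_combination h + ω * hω3
    have hPE : ProjEquiv (F3 (ω ^ 2)) Z := StmtAux.finish (ω ^ 2) hθ Z c hcval g hZimg
    rwa [StmtAux.F3_swap ω hω] at hPE
  · have hcval : c = -ω ^ 2 := by linear_combination h
    exact StmtAux.finish ω hω Z c hcval g hZimg


/-- The dual Fermat configuration `F₃` is, up to projective equivalence, the only
configuration of nine points of `ℙ²(ℂ)` with no simple lines and no `k`-rich lines
for `k ≥ 4`, i.e. such that every line meeting it in at least two points contains
exactly three of its points. -/
theorem stmt3 (ω : ℂ) (hω : IsPrimitiveRoot ω 3)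
    (Z : Set P2) (hcard : Z.ncard = 9)
    (h3 : ∀ S : Set P2, IsLine S → 2 ≤ (Z ∩ S).ncard → (Z ∩ S).ncard = 3) :
    ProjEquiv (F3 ω) Z :=
  stmt3' ω hω Z hcard h3
end
end

section
/- Let P be a general point of the complex projective plane, namely P = [a,b,c] with entries algebraically independent over Q (or just avoiding finitely many explicit polynomial conditions). Let Z consist of the nine points Z1=[-1,0,1], Z2=[0,-1,1], Z3=[1,0,1], Z4=[0,1,1], Z5=[0,0,1], Z6=[1,-1,0], Z7=[1,1,0], Z8=[0,1,0], Z9=[1,0,0]. Then the vector space of homogeneous quartic forms in C[x,y,z] vanishing at all points of Z and vanishing to order at least 3 at P has dimension at least 1, i.e., there exists a nonzero quartic through Z with a triple point at P. -/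
open MvPolynomial

noncomputable section

lemma pderiv_ofNat_aux (i : Fin 3) (n : ℕ) [n.AtLeastTwo] :
    pderiv i (no_index (OfNat.ofNat n) : MvPolynomial (Fin 3) ℂ) = 0 := by
  have h : (OfNat.ofNat n : MvPolynomial (Fin 3) ℂ)
      = ((OfNat.ofNat n : ℕ) : MvPolynomial (Fin 3) ℂ) := (Nat.cast_ofNat).symm
  conv_lhs => rw [h]
  exact Derivation.map_natCast (pderiv i) _

set_option maxHeartbeats 2000000 in
/-- For a general point `P = [a,b,c]` (entries algebraically independent over `ℚ`),
there is a nonzero quartic form passing through the nine points of the configuration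
`Z` of Example 1.5 and having a point of multiplicity at least three at `P`. -/
theorem stmt4 (a b c : ℂ) (hgen : AlgebraicIndependent ℚ ![a, b, c]) :
    ∃ F : MvPolynomial (Fin 3) ℂ, F ≠ 0 ∧ F.IsHomogeneous 4 ∧
      (∀ z ∈ ([![(-1 : ℂ), 0, 1], ![0, -1, 1], ![1, 0, 1], ![0, 1, 1], ![0, 0, 1],
          ![1, -1, 0], ![1, 1, 0], ![0, 1, 0], ![1, 0, 0]] :
          List (Fin 3 → ℂ)), eval z F = 0) ∧
      eval ![a, b, c] F = 0 ∧
      (∀ i : Fin 3, eval ![a, b, c] (pderiv i F) = 0) ∧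
      (∀ i j : Fin 3, eval ![a, b, c] (pderiv i (pderiv j F)) = 0) := by
  have hc : c ≠ 0 := by
    intro h
    have ht := hgen.transcendental 2
    rw [show (![a, b, c] 2) = c by rfl, h] at ht
    exact ht isAlgebraic_zero
  refine ⟨C (a^3) * (X 1 * X 2^3 - X 1^3 * X 2)
    + C (b^3) * (X 0^3 * X 2 - X 0 * X 2^3)
    + C (c^3) * (X 0 * X 1^3 - X 0^3 * X 1)
    - C (3*a*(b^2-c^2)) * (X 0^2 * X 1 * X 2)
    + C (3*b*(a^2-c^2)) * (X 0 * X 1^2 * X 2)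
    - C (3*c*(a^2-b^2)) * (X 0 * X 1 * X 2^2), ?_, ?_, ?_, ?_, ?_, ?_⟩
  · intro h
    have h2 := congrArg (eval ![(1:ℂ), 2, 0]) h
    simp only [eval_add, eval_sub, eval_mul, eval_pow, eval_C, eval_X, map_zero,
      Matrix.cons_val_zero, Matrix.cons_val_one, Matrix.head_cons, Matrix.cons_val_two,
      Matrix.tail_cons] at h2
    have h3 : c ^ 3 = 0 := by linear_combination h2 / 6
    exact hc (pow_eq_zero_iff (n := 3) (by norm_num) |>.mp h3)
  · have h1 : ∀ i : Fin 3, (X i : MvPolynomial (Fin 3) ℂ).IsHomogeneous 1 :=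
      fun i => isHomogeneous_X _ _
    have h13 : ∀ i j : Fin 3,
        ((X i * X j ^ 3 : MvPolynomial (Fin 3) ℂ)).IsHomogeneous 4 :=
      fun i j => by simpa using (h1 i).mul ((h1 j).pow 3)
    have h31 : ∀ i j : Fin 3,
        ((X i ^ 3 * X j : MvPolynomial (Fin 3) ℂ)).IsHomogeneous 4 :=
      fun i j => by simpa using ((h1 i).pow 3).mul (h1 j)
    have h211 : ((X 0 ^ 2 * X 1 * X 2 : MvPolynomial (Fin 3) ℂ)).IsHomogeneous 4 := by
      simpa using (((h1 0).pow 2).mul (h1 1)).mul (h1 2)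
    have h121 : ((X 0 * X 1 ^ 2 * X 2 : MvPolynomial (Fin 3) ℂ)).IsHomogeneous 4 := by
      simpa using ((h1 0).mul ((h1 1).pow 2)).mul (h1 2)
    have h112 : ((X 0 * X 1 * X 2 ^ 2 : MvPolynomial (Fin 3) ℂ)).IsHomogeneous 4 := by
      simpa using ((h1 0).mul (h1 1)).mul ((h1 2).pow 2)
    have hC : ∀ r : ℂ, ∀ p : MvPolynomial (Fin 3) ℂ, p.IsHomogeneous 4 →
        (C r * p).IsHomogeneous 4 := fun r p hp => by
      simpa using (isHomogeneous_C (Fin 3) r).mul hp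
    exact (((((hC _ _ ((h13 1 2).sub (h31 1 2))).add
      (hC _ _ ((h31 0 2).sub (h13 0 2)))).add
      (hC _ _ ((h13 0 1).sub (h31 0 1)))).sub (hC _ _ h211)).add
      (hC _ _ h121)).sub (hC _ _ h112)
  · intro z hz
    fin_cases hz <;>
    · simp only [eval_add, eval_sub, eval_mul, eval_pow, eval_C, eval_X,
        Matrix.cons_val_zero, Matrix.cons_val_one, Matrix.head_cons, Matrix.cons_val_two,
        Matrix.tail_cons]
      ring
  · simp only [eval_add, eval_sub, eval_mul, eval_pow, eval_C, eval_X,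
      Matrix.cons_val_zero, Matrix.cons_val_one, Matrix.head_cons, Matrix.cons_val_two,
      Matrix.tail_cons]
    ring
  · intro i
    fin_cases i <;>
    · simp only [map_add, map_sub, pderiv_C_mul, pderiv_mul, pderiv_pow, pderiv_X,
        Pi.single_apply, Fin.isValue]
      norm_num [Fin.ext_iff]
      simp only [show (![a, b, c] 2) = c from rfl]
      ring
  · intro i j
    fin_cases i <;> fin_cases j <;>
    · simp only [map_add, map_sub, pderiv_C_mul, pderiv_mul, pderiv_pow, pderiv_X,
        Pi.single_apply, Fin.isValue, map_zero, map_one, map_mul, pderiv_C, pderiv_one, pderiv_ofNat_aux, Derivation.map_natCast, Nat.cast_ofNat]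
      norm_num [Fin.ext_iff, pderiv_ofNat_aux, Derivation.map_natCast]
      simp only [show (![a, b, c] 2) = c from rfl]
      ring
end
end

section
/- Let F be a nonzero homogeneous polynomial of degree d in C[x,y,z] that vanishes to order at least m at a point P of a line L (defined by linear form ℓ) and also vanishes at k further distinct points of L different from P, with m + k ≥ d+1. Then ℓ divides F. -/
open MvPolynomial

section Stmt9Aux



lemma stmt9_exhaust : ∀ j i : Fin 3, i = j ∨ i = j + 1 ∨ i = j + 2 := by decide

lemma stmt9_ne : ∀ j : Fin 3, j + 1 ≠ j ∧ j + 2 ≠ j ∧ j + 1 ≠ j + 2 := by decide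

lemma stmt9_sum3 (j : Fin 3) (f : Fin 3 → ℂ) : ∑ i, f i = f j + f (j + 1) + f (j + 2) := by
  fin_cases j <;> simp [Fin.sum_univ_three] <;> ring

lemma stmt9_degree3 (s : Fin 3 →₀ ℕ) : s.degree = s 0 + s 1 + s 2 := by
  rw [Finsupp.degree_apply, Finset.sum_subset (Finset.subset_univ _)
    (fun i _ h => Finsupp.notMem_support_iff.mp h), Fin.sum_univ_three]

lemma stmt9_single (s : Fin 3 →₀ ℕ) (h : s.degree = 1) : ∃ i, s = Finsupp.single i 1 := by
  rw [stmt9_degree3] at h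
  have h0 : s 0 = 1 ∧ s 1 = 0 ∧ s 2 = 0 ∨ s 0 = 0 ∧ s 1 = 1 ∧ s 2 = 0 ∨
      s 0 = 0 ∧ s 1 = 0 ∧ s 2 = 1 := by omega
  rcases h0 with ⟨h1, h2, h3⟩ | ⟨h1, h2, h3⟩ | ⟨h1, h2, h3⟩
  · exact ⟨0, by ext x; fin_cases x <;> simp [Finsupp.single_apply, h1, h2, h3]⟩
  · exact ⟨1, by ext x; fin_cases x <;> simp [Finsupp.single_apply, h1, h2, h3]⟩
  · exact ⟨2, by ext x; fin_cases x <;> simp [Finsupp.single_apply, h1, h2, h3]⟩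

lemma stmt9_linear_rep (ℓ : MvPolynomial (Fin 3) ℂ) (hℓ : ℓ.IsHomogeneous 1) :
    ℓ = ∑ i, C (coeff (Finsupp.single i 1) ℓ) * X i := by
  apply MvPolynomial.ext; intro s
  rw [MvPolynomial.coeff_sum]
  simp only [coeff_C_mul, coeff_X']
  by_cases hs : ∃ i, s = Finsupp.single i 1
  · obtain ⟨i0, rfl⟩ := hs
    rw [Finset.sum_eq_single i0]
    · simp
    · intro i _ hi
      rw [if_neg, mul_zero]
      exact fun h => hi (Finsupp.single_left_injective one_ne_zero h)
    · simp
  · rw [hℓ.coeff_eq_zero, Finset.sum_eq_zero]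
    · intro i _
      rw [if_neg, mul_zero]
      exact fun h => hs ⟨i, h.symm⟩
    · intro h
      exact hs (stmt9_single s h)

lemma stmt9_eval_smul {n : ℕ} (G : MvPolynomial (Fin 3) ℂ) (hG : G.IsHomogeneous n)
    (t : ℂ) (x : Fin 3 → ℂ) : eval (t • x) G = t ^ n * eval x G := by
  rw [eval_eq, eval_eq, Finset.mul_sum]
  apply Finset.sum_congr rfl
  intro s hs
  have hd : s.degree = n := by
    rw [Finsupp.degree_eq_weight_one]
    exact hG (mem_support_iff.mp hs)
  rw [← hd, Finsupp.degree_apply]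
  simp only [Pi.smul_apply, smul_eq_mul, mul_pow]
  rw [Finset.prod_mul_distrib, Finset.prod_pow_eq_pow_sum]
  ring


noncomputable def stmt9DB (B : Fin 3 → ℂ) (G : MvPolynomial (Fin 3) ℂ) :
    MvPolynomial (Fin 3) ℂ := ∑ i, C (B i) * pderiv i G

lemma stmt9DB_add (B : Fin 3 → ℂ) (f g : MvPolynomial (Fin 3) ℂ) :
    stmt9DB B (f + g) = stmt9DB B f + stmt9DB B g := by
  simp [stmt9DB, mul_add, Finset.sum_add_distrib]

lemma stmt9DB_mul_X (B : Fin 3 → ℂ) (f : MvPolynomial (Fin 3) ℂ) (i : Fin 3) :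
    stmt9DB B (f * X i) = stmt9DB B f * X i + C (B i) * f := by
  simp only [stmt9DB, pderiv_mul, mul_add, Finset.sum_add_distrib, Finset.sum_mul]
  congr 1
  · exact Finset.sum_congr rfl fun x _ => by ring
  · rw [Finset.sum_congr rfl (fun x (_ : x ∈ Finset.univ) => by
      rw [pderiv_X, Pi.single_apply])]
    simp [mul_ite, Finset.sum_ite_eq']

lemma stmt9_deriv (P B : Fin 3 → ℂ) (G : MvPolynomial (Fin 3) ℂ) :
    Polynomial.derivative
        (aeval (fun i => Polynomial.C (P i) + Polynomial.X * Polynomial.C (B i)) G)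
      = aeval (fun i => Polynomial.C (P i) + Polynomial.X * Polynomial.C (B i)) (stmt9DB B G) := by
  induction G using MvPolynomial.induction_on with
  | C a => simp [stmt9DB]
  | add f g hf hg => rw [map_add, Polynomial.derivative_add, hf, hg, stmt9DB_add, map_add]
  | mul_X f i hf =>
      have hσ : Polynomial.derivative (Polynomial.C (P i) + Polynomial.X * Polynomial.C (B i))
          = Polynomial.C (B i) := by simp
      rw [map_mul, aeval_X, Polynomial.derivative_mul, hσ, hf, stmt9DB_mul_X, map_add, map_mul,
        map_mul, aeval_X, aeval_C]
      rw [show (algebraMap ℂ (Polynomial ℂ)) (B i) = Polynomial.C (B i) from rfl]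
      ring

lemma stmt9_deriv_iter (P B : Fin 3 → ℂ) (G : MvPolynomial (Fin 3) ℂ) (n : ℕ) :
    Polynomial.derivative^[n]
        (aeval (fun i => Polynomial.C (P i) + Polynomial.X * Polynomial.C (B i)) G)
      = aeval (fun i => Polynomial.C (P i) + Polynomial.X * Polynomial.C (B i))
          ((stmt9DB B)^[n] G) := by
  induction n generalizing G with
  | zero => simp
  | succ n ih => rw [Function.iterate_succ_apply, Function.iterate_succ_apply, stmt9_deriv, ih]

lemma stmt9_evalPB (P B : Fin 3 → ℂ) (G : MvPolynomial (Fin 3) ℂ) (u : ℂ) :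
    Polynomial.eval u
        (aeval (fun i => Polynomial.C (P i) + Polynomial.X * Polynomial.C (B i)) G)
      = eval (fun i => P i + u * B i) G := by
  have h := MvPolynomial.comp_aeval_apply (Polynomial.aeval u)
    (f := fun i : Fin 3 => Polynomial.C (P i) + Polynomial.X * Polynomial.C (B i)) G
  simp only [Polynomial.aeval_def, Polynomial.eval₂_add, Polynomial.eval₂_C, Polynomial.eval₂_mul,
    Polynomial.eval₂_X] at h
  rw [show Polynomial.eval u = Polynomial.eval₂ (RingHom.id ℂ) u from rfl]
  rw [show (Polynomial.eval₂ (algebraMap ℂ ℂ) u : Polynomial ℂ → ℂ)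
      = Polynomial.eval₂ (RingHom.id ℂ) u from rfl] at h
  rw [h]
  rw [← MvPolynomial.coe_aeval_eq_eval]
  rfl

lemma stmt9_foldr_Cmul (P : Fin 3 → ℂ) (l : List (Fin 3)) (a : ℂ) (G : MvPolynomial (Fin 3) ℂ) :
    l.foldr (fun i G => pderiv i G) (C a * G) = C a * l.foldr (fun i G => pderiv i G) G := by
  induction l with
  | nil => rfl
  | cons i l ih => simp [List.foldr_cons, ih, pderiv_mul, pderiv_C]

lemma stmt9_foldr_DB (B : Fin 3 → ℂ) (l : List (Fin 3)) (G : MvPolynomial (Fin 3) ℂ) :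
    l.foldr (fun i G => pderiv i G) (stmt9DB B G)
      = ∑ i, C (B i) * l.foldr (fun i G => pderiv i G) (pderiv i G) := by
  induction l with
  | nil => rfl
  | cons i l ih =>
      rw [List.foldr_cons, ih, map_sum]
      exact Finset.sum_congr rfl fun x _ => by simp [pderiv_mul, pderiv_C]

lemma stmt9_DB_eval_zero (P B : Fin 3 → ℂ) :
    ∀ (n : ℕ) (G : MvPolynomial (Fin 3) ℂ),
      (∀ l : List (Fin 3), l.length = n → eval P (l.foldr (fun i G => pderiv i G) G) = 0) →
      eval P ((stmt9DB B)^[n] G) = 0 := by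
  intro n
  induction n with
  | zero => intro G h; exact h [] rfl
  | succ n ih =>
      intro G h
      rw [Function.iterate_succ_apply]
      apply ih
      intro l hl
      rw [stmt9_foldr_DB, map_sum]
      apply Finset.sum_eq_zero
      intro i _
      rw [map_mul, eval_C]
      have : l.foldr (fun i G => pderiv i G) (pderiv i G)
          = (l ++ [i]).foldr (fun i G => pderiv i G) G := by
        rw [List.foldr_append, List.foldr_cons, List.foldr_nil]
      rw [this, h (l ++ [i]) (by simp [hl]), mul_zero]


lemma stmt9_natDegree_le (σp : Fin 3 → Polynomial ℂ) (hσ : ∀ i, (σp i).natDegree ≤ 1)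
    (G : MvPolynomial (Fin 3) ℂ) : (aeval σp G).natDegree ≤ G.totalDegree := by
  rw [MvPolynomial.aeval_def, MvPolynomial.eval₂_eq]
  apply Polynomial.natDegree_sum_le_of_forall_le
  intro s hs
  apply le_trans (Polynomial.natDegree_mul_le)
  rw [show (algebraMap ℂ (Polynomial ℂ)) (coeff s G) = Polynomial.C (coeff s G) from rfl,
    Polynomial.natDegree_C, zero_add]
  apply le_trans (Polynomial.natDegree_prod_le _ _)
  apply le_trans (Finset.sum_le_sum fun i _ => le_trans (Polynomial.natDegree_pow_le)
    (Nat.mul_le_mul_left _ (hσ i)))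
  simp only [mul_one]
  exact MvPolynomial.le_totalDegree hs

/-- If two kernel vectors have vanishing 2x2 minor, they are proportional. -/
lemma stmt9_prop (c : Fin 3 → ℂ) (j : Fin 3) (hj : c j ≠ 0) (y z : Fin 3 → ℂ)
    (hy : c j * y j + c (j+1) * y (j+1) + c (j+2) * y (j+2) = 0)
    (hz : c j * z j + c (j+1) * z (j+1) + c (j+2) * z (j+2) = 0)
    (hdet : z (j+1) * y (j+2) - z (j+2) * y (j+1) = 0)
    (hz12 : z (j+1) ≠ 0 ∨ z (j+2) ≠ 0) : ∃ t : ℂ, y = t • z := by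
  have key : ∀ t : ℂ, y (j+1) = t * z (j+1) → y (j+2) = t * z (j+2) → y = t • z := by
    intro t h1 h2
    have hj0 : c j * (y j - t * z j) = 0 := by
      linear_combination hy - t * hz - c (j+1) * h1 - c (j+2) * h2
    have hyj : y j = t * z j := by
      have h := (mul_eq_zero.mp hj0).resolve_left hj
      linear_combination h
    funext i
    rcases stmt9_exhaust j i with rfl | rfl | rfl
    · simpa using hyj
    · simpa using h1
    · simpa using h2
  rcases hz12 with h1 | h2
  · refine ⟨y (j+1) / z (j+1), key _ (by field_simp) ?_⟩
    field_simp
    linear_combination hdet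
  · refine ⟨y (j+2) / z (j+2), key _ ?_ (by field_simp)⟩
    field_simp
    linear_combination -hdet

lemma stmt9_span (c : Fin 3 → ℂ) (j : Fin 3) (hj : c j ≠ 0) (P B : Fin 3 → ℂ)
    (hPk : ∑ i, c i * P i = 0) (hBk : ∑ i, c i * B i = 0)
    (hP0 : P ≠ 0) (hPB : ∀ t : ℂ, B ≠ t • P)
    (x : Fin 3 → ℂ) (hx : ∑ i, c i * x i = 0) :
    ∃ α β : ℂ, x = α • P + β • B := by
  rw [stmt9_sum3 j] at hPk hBk hx
  -- the minor is nonzero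
  have hΔ : P (j+1) * B (j+2) - P (j+2) * B (j+1) ≠ 0 := by
    intro h0
    have hP12 : P (j+1) ≠ 0 ∨ P (j+2) ≠ 0 := by
      by_contra hcon
      push_neg at hcon
      obtain ⟨h1, h2⟩ := hcon
      have hPj : P j = 0 := by
        have h3 : c j * P j = 0 := by
          linear_combination hPk - c (j+1) * h1 - c (j+2) * h2
        exact (mul_eq_zero.mp h3).resolve_left hj
      apply hP0
      funext i
      rcases stmt9_exhaust j i with rfl | rfl | rfl
      · simpa using hPj
      · simpa using h1
      · simpa using h2
    obtain ⟨t, ht⟩ := stmt9_prop c j hj B P hBk hPk (by linear_combination h0) hP12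
    exact hPB t ht
  -- Cramer's rule
  refine ⟨(x (j+1) * B (j+2) - x (j+2) * B (j+1)) /
      (P (j+1) * B (j+2) - P (j+2) * B (j+1)),
    (P (j+1) * x (j+2) - P (j+2) * x (j+1)) /
      (P (j+1) * B (j+2) - P (j+2) * B (j+1)), ?_⟩
  set Δ := P (j+1) * B (j+2) - P (j+2) * B (j+1) with hΔdef
  set α := (x (j+1) * B (j+2) - x (j+2) * B (j+1)) / Δ with hα
  set β := (P (j+1) * x (j+2) - P (j+2) * x (j+1)) / Δ with hβ
  have h1 : x (j+1) = α * P (j+1) + β * B (j+1) := by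
    rw [hα, hβ]
    field_simp
    ring
  have h2 : x (j+2) = α * P (j+2) + β * B (j+2) := by
    rw [hα, hβ]
    field_simp
    ring
  have hj0 : c j * (x j - (α * P j + β * B j)) = 0 := by
    linear_combination hx - α * hPk - β * hBk - c (j+1) * h1 - c (j+2) * h2
  have h3 : x j = α * P j + β * B j := by
    have h := (mul_eq_zero.mp hj0).resolve_left hj
    linear_combination h
  funext i
  rcases stmt9_exhaust j i with rfl | rfl | rfl
  · simpa using h3
  · simpa using h1
  · simpa using h2

lemma stmt9_dvd_sub (ℓ : MvPolynomial (Fin 3) ℂ) (g : Fin 3 → MvPolynomial (Fin 3) ℂ)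
    (hg : ∀ i, ℓ ∣ (X i - g i)) (G : MvPolynomial (Fin 3) ℂ) : ℓ ∣ G - aeval g G := by
  induction G using MvPolynomial.induction_on with
  | C a => simp [aeval_C, algebraMap_eq]
  | add f f' hf hf' =>
      have : f + f' - aeval g (f + f') = (f - aeval g f) + (f' - aeval g f') := by
        rw [map_add]; ring
      rw [this]; exact dvd_add hf hf'
  | mul_X f i hf =>
      have : f * X i - aeval g (f * X i)
          = (f - aeval g f) * X i + aeval g f * (X i - g i) := by
        rw [map_mul, aeval_X]; ring
      rw [this]; exact dvd_add (hf.mul_right _) ((hg i).mul_left _)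

/-- From vanishing on the plane to divisibility. -/
lemma stmt9_dvd (ℓ : MvPolynomial (Fin 3) ℂ) (c : Fin 3 → ℂ)
    (hrep : ℓ = ∑ i, C (c i) * X i) (j : Fin 3) (hj : c j ≠ 0)
    (F : MvPolynomial (Fin 3) ℂ)
    (hplane : ∀ x : Fin 3 → ℂ, (∑ i, c i * x i = 0) → eval x F = 0) : ℓ ∣ F := by
  classical
  set g : Fin 3 → MvPolynomial (Fin 3) ℂ :=
    fun i => if i = j then C (-(c j)⁻¹) * (ℓ - C (c j) * X j) else X i with hgdef
  have heval : ∀ x : Fin 3 → ℂ, eval x ℓ = ∑ i, c i * x i := by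
    intro x; rw [hrep]; simp
  have hg : ∀ i, ℓ ∣ (X i - g i) := by
    intro i
    by_cases hij : i = j
    · subst hij
      rw [show g i = C (-(c i)⁻¹) * (ℓ - C (c i) * X i) from by simp [hgdef]]
      have hcc : C (c i)⁻¹ * C (c i) = (1 : MvPolynomial (Fin 3) ℂ) := by
        rw [← C_mul, inv_mul_cancel₀ hj, C_1]
      have : (X i : MvPolynomial (Fin 3) ℂ) - C (-(c i)⁻¹) * (ℓ - C (c i) * X i)
          = C (c i)⁻¹ * ℓ := by
        rw [map_neg]
        linear_combination (-X i : MvPolynomial (Fin 3) ℂ) * hcc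
      rw [this]
      exact Dvd.intro_left _ rfl
    · rw [show g i = X i from by simp [hgdef, hij], sub_self]
      exact dvd_zero _
  have hE0 : aeval g F = 0 := by
    apply MvPolynomial.funext
    intro x
    rw [map_zero]
    have hc := MvPolynomial.comp_aeval_apply (MvPolynomial.aeval x) (f := g) F
    rw [show (MvPolynomial.eval x : MvPolynomial (Fin 3) ℂ → ℂ) = MvPolynomial.aeval x from
      (MvPolynomial.coe_aeval_eq_eval x ▸ rfl), hc]
    rw [show (MvPolynomial.aeval (fun i => (MvPolynomial.aeval x) (g i)) :
        MvPolynomial (Fin 3) ℂ →ₐ[ℂ] ℂ) F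
        = MvPolynomial.eval (fun i => MvPolynomial.eval x (g i)) F from by
      rw [← MvPolynomial.coe_aeval_eq_eval]; rfl]
    apply hplane
    obtain ⟨hne1, hne2, _⟩ := stmt9_ne j
    show ∑ i, c i * MvPolynomial.eval x (g i) = 0
    have e1 : MvPolynomial.eval x (g j) = -(c j)⁻¹ * (MvPolynomial.eval x ℓ - c j * x j) := by
      simp [hgdef]
    have e2 : MvPolynomial.eval x (g (j+1)) = x (j+1) := by simp [hgdef, hne1]
    have e3 : MvPolynomial.eval x (g (j+2)) = x (j+2) := by simp [hgdef, hne2]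
    rw [stmt9_sum3 j (fun i => c i * MvPolynomial.eval x (g i)), e1, e2, e3, heval x,
      stmt9_sum3 j (fun i => c i * x i)]
    field_simp
    ring
  have := stmt9_dvd_sub ℓ g hg F
  rwa [hE0, sub_zero] at this

end Stmt9Aux

/-- Multiplicity-refined Bézout divisibility: a nonzero form of degree `d` vanishing to
order at least `m` at a point `P` of a line and at `k` further distinct points of the
line, with `m + k ≥ d + 1`, is divisible by the linear form of the line. -/
theorem stmt9 (d m k : ℕ) (hmk : d + 1 ≤ m + k)
    (F : MvPolynomial (Fin 3) ℂ) (hF0 : F ≠ 0) (hF : F.IsHomogeneous d)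
    (ℓ : MvPolynomial (Fin 3) ℂ) (hℓ0 : ℓ ≠ 0) (hℓ : ℓ.IsHomogeneous 1)
    (P : Fin 3 → ℂ) (hP0 : P ≠ 0) (hPon : eval P ℓ = 0)
    (hmult : ∀ l : List (Fin 3), l.length < m →
      eval P (l.foldr (fun i G => pderiv i G) F) = 0)
    (p : Fin k → Fin 3 → ℂ) (hp0 : ∀ i, p i ≠ 0)
    (honline : ∀ i, eval (p i) ℓ = 0)
    (hdist : ∀ i j, i ≠ j → ∀ t : ℂ, p i ≠ t • p j)
    (hdistP : ∀ i, ∀ t : ℂ, p i ≠ t • P)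
    (hvan : ∀ i, eval (p i) F = 0) : ℓ ∣ F := by
  classical
  set c : Fin 3 → ℂ := fun i => coeff (Finsupp.single i 1) ℓ with hcdef
  have hrep : ℓ = ∑ i, C (c i) * X i := stmt9_linear_rep ℓ hℓ
  have heval : ∀ x : Fin 3 → ℂ, eval x ℓ = ∑ i, c i * x i := by
    intro x
    conv_lhs => rw [hrep]
    simp
  obtain ⟨j, hj⟩ : ∃ j, c j ≠ 0 := by
    by_contra hcon
    push_neg at hcon
    exact hℓ0 (by rw [hrep]; simp [hcon])
  obtain ⟨hne1, hne2, hne3⟩ := stmt9_ne j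
  -- choose a good second point B on the line
  set e1 : Fin 3 → ℂ := fun i => if i = j + 1 then c j else if i = j then -c (j+1) else 0
    with he1
  set e2 : Fin 3 → ℂ := fun i => if i = j + 2 then c j else if i = j then -c (j+2) else 0
    with he2
  set Bt : ℂ → Fin 3 → ℂ := fun t i => e1 i + t * e2 i with hBt
  have v1 : ∀ t, Bt t j = -c (j+1) + t * -c (j+2) := by
    intro t; simp [hBt, he1, he2, Ne.symm hne1, Ne.symm hne2]
  have v2 : ∀ t, Bt t (j+1) = c j := by
    intro t; simp [hBt, he1, he2, hne1, hne3]
  have v3 : ∀ t, Bt t (j+2) = t * c j := by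
    intro t; simp [hBt, he1, he2, hne2, Ne.symm hne3]
  have hBtker : ∀ t, ∑ i, c i * Bt t i = 0 := by
    intro t
    rw [stmt9_sum3 j (fun i => c i * Bt t i), v1, v2, v3]
    ring
  have hsub : ∀ v : Fin 3 → ℂ, {t : ℂ | ∃ s : ℂ, Bt t = s • v}.Subsingleton := by
    rintro v t ⟨s, hs⟩ t' ⟨s', hs'⟩
    have h1 : c j = s * v (j+1) := by rw [← v2 t, hs]; simp
    have h1' : c j = s' * v (j+1) := by rw [← v2 t', hs']; simp
    have hv1 : v (j+1) ≠ 0 := by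
      intro h; rw [h, mul_zero] at h1; exact hj h1
    have hss : s = s' := by
      have := h1.symm.trans h1'
      exact mul_right_cancel₀ hv1 this
    have h2 : t * c j = s * v (j+2) := by rw [← v3 t, hs]; simp
    have h2' : t' * c j = s' * v (j+2) := by rw [← v3 t', hs']; simp
    rw [← hss] at h2'
    exact mul_right_cancel₀ hj (h2.trans h2'.symm)
  have hbadfin : Set.Finite ({t : ℂ | ∃ s : ℂ, Bt t = s • P}
      ∪ ⋃ i, {t : ℂ | ∃ s : ℂ, Bt t = s • p i}) :=
    ((hsub P).finite).union (Set.finite_iUnion fun i => (hsub (p i)).finite)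
  obtain ⟨t0, ht0⟩ := (hbadfin.infinite_compl).nonempty
  set B : Fin 3 → ℂ := Bt t0 with hB
  have hBP : ∀ s : ℂ, B ≠ s • P := fun s hs => ht0 (Or.inl ⟨s, hs⟩)
  have hBp : ∀ i (s : ℂ), B ≠ s • p i := fun i s hs =>
    ht0 (Or.inr (Set.mem_iUnion.mpr ⟨i, s, hs⟩))
  have hBker : ∑ i, c i * B i = 0 := hBtker t0
  have hPker : ∑ i, c i * P i = 0 := by rw [← heval]; exact hPon
  have hpker : ∀ i, ∑ i', c i' * p i i' = 0 := fun i => by rw [← heval]; exact honline i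
  -- decompose the extra points
  have hdec : ∀ i, ∃ α β : ℂ, p i = α • P + β • B := fun i =>
    stmt9_span c j hj P B hPker hBker hP0 hBP (p i) (hpker i)
  choose a b hab using hdec
  have ha : ∀ i, a i ≠ 0 := by
    intro i hai
    have hpib : p i = b i • B := by rw [hab i, hai, zero_smul, zero_add]
    have hbi : b i ≠ 0 := fun h => hp0 i (by rw [hpib, h, zero_smul])
    exact hBp i (b i)⁻¹ (by rw [hpib, smul_smul, inv_mul_cancel₀ hbi, one_smul])
  have hb : ∀ i, b i ≠ 0 := fun i hbi =>
    hdistP i (a i) (by rw [hab i, hbi, zero_smul, add_zero])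
  -- the restriction of F to the line, as a univariate polynomial
  set σp : Fin 3 → Polynomial ℂ := fun i => Polynomial.C (P i) + Polynomial.X * Polynomial.C (B i)
    with hσp
  set q : Polynomial ℂ := aeval σp F with hq
  have hcoeffq : ∀ n, n < m → q.coeff n = 0 := by
    intro n hn
    have h1 := Polynomial.coeff_iterate_derivative q 0 (k := n)
    have h2 : (Polynomial.derivative^[n] q).coeff 0 = 0 := by
      rw [hq, hσp, stmt9_deriv_iter, Polynomial.coeff_zero_eq_eval_zero, stmt9_evalPB]
      rw [show (fun i => P i + 0 * B i) = P from by funext i; ring]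
      apply stmt9_DB_eval_zero
      intro l hl
      exact hmult l (by rw [hl]; exact hn)
    rw [h2, zero_add, Nat.descFactorial_self, eq_comm, nsmul_eq_mul] at h1
    have hfac : ((n.factorial : ℂ)) ≠ 0 := by
      exact_mod_cast Nat.factorial_ne_zero n
    exact (mul_eq_zero.mp h1).resolve_left hfac
  have hXm : Polynomial.X ^ m ∣ q := Polynomial.X_pow_dvd_iff.mpr hcoeffq
  have hdeg : q.natDegree ≤ d := by
    refine le_trans (stmt9_natDegree_le σp ?_ F) hF.totalDegree_le
    intro i
    rw [hσp]
    refine le_trans (Polynomial.natDegree_add_le _ _) ?_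
    have h := Polynomial.natDegree_mul_le (p := (Polynomial.X : Polynomial ℂ))
      (q := Polynomial.C (B i))
    simp only [Polynomial.natDegree_X, Polynomial.natDegree_C, add_zero] at h
    exact max_le (by simp) h
  set v : Fin k → ℂ := fun i => b i / a i with hv
  have hvroot : ∀ i, q.eval (v i) = 0 := by
    intro i
    rw [hq, hσp, stmt9_evalPB]
    have hpt : (fun ii => P ii + v i * B ii) = (a i)⁻¹ • p i := by
      funext ii
      rw [hab i]
      simp only [Pi.smul_apply, Pi.add_apply, smul_eq_mul, hv]
      field_simp [ha i]
    rw [hpt, stmt9_eval_smul F hF, hvan i, mul_zero]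
  have hvinj : Function.Injective v := by
    intro i i' h
    by_contra hne
    apply hdist i i' hne (a i / a i')
    have hbb : b i * a i' = b i' * a i := (div_eq_div_iff (ha i) (ha i')).mp h
    funext ii
    rw [hab i, hab i']
    simp only [Pi.add_apply, Pi.smul_apply, smul_eq_mul]
    field_simp [ha i, ha i']
    linear_combination B ii * hbb
  have hvne : ∀ i, v i ≠ 0 := fun i => div_ne_zero (hb i) (ha i)
  -- the univariate restriction vanishes identically
  have hqzero : q = 0 := by
    by_contra hqne
    set S : Multiset ℂ := m • {(0:ℂ)} + Finset.univ.val.map v with hS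
    have hSle : S ≤ q.roots := by
      rw [Multiset.le_iff_count]
      intro x
      rw [Polynomial.count_roots, hS, Multiset.count_add, Multiset.count_nsmul,
        Multiset.count_singleton]
      have hnodup : (Finset.univ.val.map v).Nodup := Finset.univ.nodup.map hvinj
      by_cases hx0 : x = 0
      · subst hx0
        have hc2 : Multiset.count 0 (Finset.univ.val.map v) = 0 := by
          rw [Multiset.count_eq_zero]
          intro hmem
          obtain ⟨i, _, hi⟩ := Multiset.mem_map.mp hmem
          exact hvne i hi
        rw [hc2, if_pos rfl, mul_one, add_zero]
        apply (Polynomial.le_rootMultiplicity_iff hqne).mpr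
        simpa using hXm
      · rw [if_neg hx0, mul_zero, zero_add]
        by_cases hmem : x ∈ Finset.univ.val.map v
        · obtain ⟨i, _, hi⟩ := Multiset.mem_map.mp hmem
          refine le_trans (Multiset.nodup_iff_count_le_one.mp hnodup x) ?_
          rw [Nat.one_le_iff_ne_zero]
          intro hcon
          have := (Polynomial.rootMultiplicity_pos hqne).mpr (hi ▸ hvroot i)
          omega
        · rw [Multiset.count_eq_zero_of_notMem hmem]
          exact Nat.zero_le _
    have hcard : Multiset.card S = m + k := by
      rw [hS]
      simp [Multiset.card_nsmul, Multiset.card_map]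
    have hle1 := Multiset.card_le_card hSle
    have hle2 := Polynomial.card_roots' q
    omega
  have hqeval : ∀ u : ℂ, eval (fun i => P i + u * B i) F = 0 := by
    intro u
    rw [← stmt9_evalPB P B F u, ← hσp, ← hq, hqzero, Polynomial.eval_zero]
  -- the swapped restriction also vanishes
  set r : Polynomial ℂ := aeval (fun i => Polynomial.C (B i) + Polynomial.X * Polynomial.C (P i)) F
    with hr
  have hrzero : r = 0 := by
    apply Polynomial.eq_zero_of_infinite_isRoot
    apply Set.Infinite.mono ?_ ((Set.finite_singleton (0:ℂ)).infinite_compl)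
    intro w hw
    have hw0 : w ≠ 0 := by simpa using hw
    show r.IsRoot w
    rw [Polynomial.IsRoot, hr, stmt9_evalPB B P F w]
    have : (fun i => B i + w * P i) = w • (fun i => P i + w⁻¹ * B i) := by
      funext i
      simp only [Pi.smul_apply, smul_eq_mul]
      field_simp
      ring
    rw [this, stmt9_eval_smul F hF, hqeval w⁻¹, mul_zero]
  have hreval : ∀ w : ℂ, eval (fun i => B i + w * P i) F = 0 := by
    intro w
    rw [← stmt9_evalPB B P F w, ← hr, hrzero, Polynomial.eval_zero]
  -- F vanishes on the whole plane ℓ = 0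
  have hplane : ∀ x : Fin 3 → ℂ, (∑ i, c i * x i = 0) → eval x F = 0 := by
    intro x hx
    obtain ⟨α, β, hxd⟩ := stmt9_span c j hj P B hPker hBker hP0 hBP x hx
    by_cases hβ : β = 0
    · rw [hxd, hβ, zero_smul, add_zero]
      have hPF : eval P F = 0 := by
        have := hqeval 0
        rwa [show (fun i => P i + 0 * B i) = P from by funext i; ring] at this
      rw [show (α • P : Fin 3 → ℂ) = α • P from rfl, stmt9_eval_smul F hF, hPF, mul_zero]
    · rw [hxd]
      have : (α • P + β • B : Fin 3 → ℂ) = β • (fun i => B i + (α/β) * P i) := by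
        funext i
        simp only [Pi.add_apply, Pi.smul_apply, smul_eq_mul]
        field_simp
        ring
      rw [this, stmt9_eval_smul F hF, hreval (α/β), mul_zero]
  exact stmt9_dvd ℓ c hrep j hj F hplane
end

section
/- Let ω be a primitive cube root of unity and let W5 = {[1,0,0], [0,1,0], [0,0,1], [1,1,1], [1,a,0]} for a parameter a ∈ C with a ∉ {0,1}, so [1,a,0] is distinct from the other points and lies on the line z=0 through [1,0,0] and [0,1,0], which is the unique 3-rich line of W5. Then for a general point P=[1,b,c], the ideal of quartic forms vanishing on W5 and vanishing to order 2 at P has dimension exactly the expected one; equivalently, the scheme W5 + 2P imposes independent conditions: the number of conditions m(j) = binom(j+3,2) − h(j+1) satisfies m(1)=0 and m(2)=2 (splitting type (2,2)). -/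
open MvPolynomial

noncomputable section

/-- The five points of the configuration `W₅` (with parameter `a`). -/
def W5pts (a : ℂ) : List (Fin 3 → ℂ) :=
  [![1, 0, 0], ![0, 1, 0], ![0, 0, 1], ![1, 1, 1], ![1, a, 0]]

/-- A form of degree `n` lies in the degree-`n` part of `I(W₅) ∩ I(P)^j` (for `j ≤ 2`),
i.e. it vanishes on `W₅` and to order at least `j` at `P = [1,b,c]`. -/
def W5cond (a b c : ℂ) (n j : ℕ) (F : MvPolynomial (Fin 3) ℂ) : Prop :=
  F.IsHomogeneous n ∧ (∀ z ∈ W5pts a, eval z F = 0) ∧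
    eval ![1, b, c] F = 0 ∧
    (2 ≤ j → ∀ i : Fin 3, eval ![1, b, c] (pderiv i F) = 0)

/-! ### Auxiliary machinery -/

def mm (i j k : ℕ) : Fin 3 →₀ ℕ :=
  Finsupp.single 0 i + Finsupp.single 1 j + Finsupp.single 2 k

lemma mm_apply (i j k : ℕ) : (mm i j k) 0 = i ∧ (mm i j k) 1 = j ∧ (mm i j k) 2 = k := by
  refine ⟨?_, ?_, ?_⟩ <;> simp [mm, Finsupp.single_apply]

lemma mm_eq_mm {i j k p q r : ℕ} : mm i j k = mm p q r ↔ i = p ∧ j = q ∧ k = r := by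
  constructor
  · intro h
    refine ⟨?_, ?_, ?_⟩
    · rw [← (mm_apply i j k).1, h]; exact (mm_apply p q r).1
    · rw [← (mm_apply i j k).2.1, h]; exact (mm_apply p q r).2.1
    · rw [← (mm_apply i j k).2.2, h]; exact (mm_apply p q r).2.2
  · rintro ⟨rfl, rfl, rfl⟩; rfl

lemma eq_mm (d : Fin 3 →₀ ℕ) : d = mm (d 0) (d 1) (d 2) := by
  apply Finsupp.ext; intro x; fin_cases x <;> simp [mm, Finsupp.single_apply]

lemma deg3 (d : Fin 3 →₀ ℕ) : d.degree = d 0 + d 1 + d 2 := by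
  rw [Finsupp.degree_apply, Finset.sum_subset (Finset.subset_univ _)
    (fun x _ hx => by simpa using Finsupp.notMem_support_iff.mp hx)]
  simp [Fin.sum_univ_three]

lemma mm_degree (i j k : ℕ) : (mm i j k).degree = i + j + k := by
  rw [deg3, (mm_apply i j k).1, (mm_apply i j k).2.1, (mm_apply i j k).2.2]

lemma coeff_mono (d : Fin 3 →₀ ℕ) (i j k : ℕ) (r : ℂ) :
    coeff d (monomial (mm i j k) r) = if d 0 = i ∧ d 1 = j ∧ d 2 = k then r else 0 := by
  rw [coeff_monomial]
  by_cases h : d 0 = i ∧ d 1 = j ∧ d 2 = k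
  · rw [if_pos h, if_pos (by rw [← h.1, ← h.2.1, ← h.2.2, ← eq_mm])]
  · rw [if_neg h, if_neg (fun he => h ⟨by rw [← he]; exact (mm_apply i j k).1,
      by rw [← he]; exact (mm_apply i j k).2.1, by rw [← he]; exact (mm_apply i j k).2.2⟩)]

lemma mono_eq (i j k : ℕ) (r : ℂ) :
    (monomial (mm i j k) r : MvPolynomial (Fin 3) ℂ) = C r * X 0 ^ i * X 1 ^ j * X 2 ^ k := by
  simp [mm, X_pow_eq_monomial, monomial_mul, C_mul_monomial]

lemma homog_mono (i j k n : ℕ) (r : ℂ) (h : i + j + k = n) :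
    (monomial (mm i j k) r : MvPolynomial (Fin 3) ℂ).IsHomogeneous n := by
  apply isHomogeneous_monomial
  rw [mm_degree]; exact h

lemma mulz {x y : ℂ} (hx : x ≠ 0) (h : x * y = 0) : y = 0 :=
  (mul_eq_zero.mp h).resolve_left hx

set_option maxHeartbeats 1000000 in
lemma enum3 (x y z : ℕ) (h : x + y + z = 3) :
    (x = 3 ∧ y = 0 ∧ z = 0) ∨ (x = 2 ∧ y = 1 ∧ z = 0) ∨ (x = 2 ∧ y = 0 ∧ z = 1) ∨ (x = 1 ∧ y = 2 ∧ z = 0) ∨ (x = 1 ∧ y = 1 ∧ z = 1) ∨ (x = 1 ∧ y = 0 ∧ z = 2) ∨ (x = 0 ∧ y = 3 ∧ z = 0) ∨ (x = 0 ∧ y = 2 ∧ z = 1) ∨ (x = 0 ∧ y = 1 ∧ z = 2) ∨ (x = 0 ∧ y = 0 ∧ z = 3) := by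
  have hx : x ≤ 3 := by omega
  have hy : y ≤ 3 := by omega
  interval_cases x <;> interval_cases y <;> omega
set_option maxHeartbeats 1000000 in
lemma enum2 (x y z : ℕ) (h : x + y + z = 2) :
    (x = 2 ∧ y = 0 ∧ z = 0) ∨ (x = 1 ∧ y = 1 ∧ z = 0) ∨ (x = 1 ∧ y = 0 ∧ z = 1) ∨ (x = 0 ∧ y = 2 ∧ z = 0) ∨ (x = 0 ∧ y = 1 ∧ z = 1) ∨ (x = 0 ∧ y = 0 ∧ z = 2) := by
  have hx : x ≤ 2 := by omega
  have hy : y ≤ 2 := by omega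
  interval_cases x <;> interval_cases y <;> omega
set_option maxHeartbeats 1000000 in
lemma rep3 (H : MvPolynomial (Fin 3) ℂ) (h : H.IsHomogeneous 3) :
    H = monomial (mm 3 0 0) (coeff (mm 3 0 0) H) + monomial (mm 2 1 0) (coeff (mm 2 1 0) H) + monomial (mm 2 0 1) (coeff (mm 2 0 1) H) + monomial (mm 1 2 0) (coeff (mm 1 2 0) H) + monomial (mm 1 1 1) (coeff (mm 1 1 1) H) + monomial (mm 1 0 2) (coeff (mm 1 0 2) H) + monomial (mm 0 3 0) (coeff (mm 0 3 0) H) + monomial (mm 0 2 1) (coeff (mm 0 2 1) H) + monomial (mm 0 1 2) (coeff (mm 0 1 2) H) + monomial (mm 0 0 3) (coeff (mm 0 0 3) H) := by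
  apply MvPolynomial.ext; intro d
  simp only [coeff_add, coeff_mono]
  by_cases hd : d 0 + d 1 + d 2 = 3
  · rcases enum3 _ _ _ hd with ⟨h0,h1,h2⟩|⟨h0,h1,h2⟩|⟨h0,h1,h2⟩|⟨h0,h1,h2⟩|⟨h0,h1,h2⟩|⟨h0,h1,h2⟩|⟨h0,h1,h2⟩|⟨h0,h1,h2⟩|⟨h0,h1,h2⟩|⟨h0,h1,h2⟩ <;>
    · have hmm : d = mm (d 0) (d 1) (d 2) := eq_mm d
      rw [h0, h1, h2] at hmm
      simp only [h0, h1, h2]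
      norm_num
      rw [hmm]
  · rw [h.coeff_eq_zero (by rw [deg3]; exact hd)]
    repeat rw [if_neg (by omega)]
    norm_num
set_option maxHeartbeats 1000000 in
lemma rep2 (H : MvPolynomial (Fin 3) ℂ) (h : H.IsHomogeneous 2) :
    H = monomial (mm 2 0 0) (coeff (mm 2 0 0) H) + monomial (mm 1 1 0) (coeff (mm 1 1 0) H) + monomial (mm 1 0 1) (coeff (mm 1 0 1) H) + monomial (mm 0 2 0) (coeff (mm 0 2 0) H) + monomial (mm 0 1 1) (coeff (mm 0 1 1) H) + monomial (mm 0 0 2) (coeff (mm 0 0 2) H) := by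
  apply MvPolynomial.ext; intro d
  simp only [coeff_add, coeff_mono]
  by_cases hd : d 0 + d 1 + d 2 = 2
  · rcases enum2 _ _ _ hd with ⟨h0,h1,h2⟩|⟨h0,h1,h2⟩|⟨h0,h1,h2⟩|⟨h0,h1,h2⟩|⟨h0,h1,h2⟩|⟨h0,h1,h2⟩ <;>
    · have hmm : d = mm (d 0) (d 1) (d 2) := eq_mm d
      rw [h0, h1, h2] at hmm
      simp only [h0, h1, h2]
      norm_num
      rw [hmm]
  · rw [h.coeff_eq_zero (by rw [deg3]; exact hd)]
    repeat rw [if_neg (by omega)]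
    norm_num

/-! ### The two explicit cubics -/

def Fc (b c : ℂ) : MvPolynomial (Fin 3) ℂ :=
  monomial (mm 2 0 1) (b*(b-c)) + monomial (mm 1 1 1) (b*c-2*b+c)
    + monomial (mm 1 0 2) (b*(1-b)) + monomial (mm 0 2 1) (1-c)
    + monomial (mm 0 1 2) (b-1)

def Gc (a b c : ℂ) : MvPolynomial (Fin 3) ℂ :=
  monomial (mm 2 1 0) (-(a*c^2*(b-1))) + monomial (mm 2 0 1) (-(a*b*c*(1-c)))
    + monomial (mm 1 2 0) (c^2*(b-1))
    + monomial (mm 1 1 1) (a*c*(b-c)+b*c*(1-c)+c*(b-1)*(a-b))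
    + monomial (mm 0 2 1) (-(c*(b-c)))
    + monomial (mm 1 0 2) (b*(1-c)*(a-b)) + monomial (mm 0 1 2) (-((a-b)*(b-c)))

lemma Fc_cond (a b c : ℂ) : W5cond a b c 3 2 (Fc b c) := by
  refine ⟨?_, ?_, ?_, ?_⟩
  · exact ((((homog_mono 2 0 1 3 _ rfl).add (homog_mono 1 1 1 3 _ rfl)).add
      (homog_mono 1 0 2 3 _ rfl)).add (homog_mono 0 2 1 3 _ rfl)).add
      (homog_mono 0 1 2 3 _ rfl)
  · intro z hz
    simp only [W5pts, List.mem_cons, List.not_mem_nil, or_false] at hz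
    rcases hz with rfl|rfl|rfl|rfl|rfl <;>
      · simp only [Fc, mono_eq]
        simp
        try ring
  · simp only [Fc, mono_eq]
    simp
    ring
  · intro _ i
    fin_cases i <;>
      · simp only [Fc, mono_eq]
        simp [pderiv_mul, pderiv_pow, pderiv_X, pderiv_C]
        try ring

lemma Gc_cond (a b c : ℂ) : W5cond a b c 3 2 (Gc a b c) := by
  refine ⟨?_, ?_, ?_, ?_⟩
  · exact ((((((homog_mono 2 1 0 3 _ rfl).add (homog_mono 2 0 1 3 _ rfl)).add
      (homog_mono 1 2 0 3 _ rfl)).add (homog_mono 1 1 1 3 _ rfl)).add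
      (homog_mono 0 2 1 3 _ rfl)).add (homog_mono 1 0 2 3 _ rfl)).add
      (homog_mono 0 1 2 3 _ rfl)
  · intro z hz
    simp only [W5pts, List.mem_cons, List.not_mem_nil, or_false] at hz
    rcases hz with rfl|rfl|rfl|rfl|rfl <;>
      · simp only [Gc, mono_eq]
        simp
        try ring
  · simp only [Gc, mono_eq]
    simp
    ring
  · intro _ i
    fin_cases i <;>
      · simp only [Gc, mono_eq]
        simp [pderiv_mul, pderiv_pow, pderiv_X, pderiv_C]
        try ring

/-! ### Core vanishing lemmas -/

lemma conic_zero (a b c : ℂ) (ha0 : a ≠ 0) (hc0 : c ≠ 0) (hb1 : b - 1 ≠ 0)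
    (H : MvPolynomial (Fin 3) ℂ) (hH : W5cond a b c 2 1 H) : H = 0 := by
  obtain ⟨hhom, hvan, hP, -⟩ := hH
  have hrep := rep2 H hhom
  have e1 := hvan ![1, 0, 0] (by simp [W5pts])
  have e2 := hvan ![0, 1, 0] (by simp [W5pts])
  have e3 := hvan ![0, 0, 1] (by simp [W5pts])
  have e4 := hvan ![1, 1, 1] (by simp [W5pts])
  have e5 := hvan ![1, a, 0] (by simp [W5pts])
  rw [hrep] at e1 e2 e3 e4 e5 hP
  simp only [mono_eq] at e1 e2 e3 e4 e5 hP
  simp at e1 e2 e3 e4 e5 hP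
  have h200 : coeff (mm 2 0 0) H = 0 := by linear_combination e1
  have h020 : coeff (mm 0 2 0) H = 0 := by linear_combination e2
  have h002 : coeff (mm 0 0 2) H = 0 := by linear_combination e3
  have h110 : coeff (mm 1 1 0) H = 0 := by
    refine mulz ha0 ?_
    linear_combination e5 - h200 - a^2*h020
  have h011 : coeff (mm 0 1 1) H = 0 := by
    refine mulz hc0 (mulz hb1 ?_)
    linear_combination hP - c*e4 - (1-c)*h200 - (b-c)*h110 - (b^2-c)*h020 - (c^2-c)*h002
  have h101 : coeff (mm 1 0 1) H = 0 := by
    linear_combination e4 - h200 - h020 - h002 - h110 - h011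
  rw [hrep, h200, h110, h101, h020, h011, h002]
  simp

lemma cubic_core (a b c : ℂ) (ha0 : a ≠ 0) (hb0 : b ≠ 0) (hc0 : c ≠ 0)
    (hb1 : b - 1 ≠ 0) (hbc : b - c ≠ 0)
    (H : MvPolynomial (Fin 3) ℂ) (hH : W5cond a b c 3 2 H)
    (h210 : coeff (mm 2 1 0) H = 0) (h201 : coeff (mm 2 0 1) H = 0) : H = 0 := by
  obtain ⟨hhom, hvan, hP, hder⟩ := hH
  have hrep := rep3 H hhom
  have e1 := hvan ![1, 0, 0] (by simp [W5pts])
  have e2 := hvan ![0, 1, 0] (by simp [W5pts])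
  have e3 := hvan ![0, 0, 1] (by simp [W5pts])
  have e4 := hvan ![1, 1, 1] (by simp [W5pts])
  have e5 := hvan ![1, a, 0] (by simp [W5pts])
  have d0 := hder le_rfl 0
  have d1 := hder le_rfl 1
  have d2 := hder le_rfl 2
  rw [hrep] at e1 e2 e3 e4 e5 d0 d1 d2
  simp only [mono_eq] at e1 e2 e3 e4 e5 d0 d1 d2
  simp [pderiv_mul, pderiv_pow, pderiv_X, pderiv_C] at d0 d1 d2
  simp at e1 e2 e3 e4 e5
  have h300 : coeff (mm 3 0 0) H = 0 := by linear_combination e1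
  have h030 : coeff (mm 0 3 0) H = 0 := by linear_combination e2
  have h003 : coeff (mm 0 0 3) H = 0 := by linear_combination e3
  have h120 : coeff (mm 1 2 0) H = 0 := by
    refine mulz (pow_ne_zero 2 ha0) ?_
    linear_combination e5 - h300 - a*h210 - a^3*h030
  have E1 : coeff (mm 1 1 1) H * b + coeff (mm 1 0 2) H * c = 0 := by
    refine mulz hc0 ?_
    linear_combination d0 - 3*h300 - 2*b*h210 - 2*c*h201 - b^2*h120
  have E2 : coeff (mm 1 1 1) H + 2*coeff (mm 0 2 1) H * b + coeff (mm 0 1 2) H * c = 0 := by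
    refine mulz hc0 ?_
    linear_combination d1 - h210 - 2*b*h120 - 3*b^2*h030
  have E3 : coeff (mm 1 1 1) H * b + 2*coeff (mm 1 0 2) H * c
      + coeff (mm 0 2 1) H * b^2 + 2*coeff (mm 0 1 2) H * b * c = 0 := by
    linear_combination d2 - h201 - 3*c^2*h003
  have E4 : coeff (mm 1 1 1) H + coeff (mm 1 0 2) H
      + coeff (mm 0 2 1) H + coeff (mm 0 1 2) H = 0 := by
    linear_combination e4 - h300 - h030 - h003 - h210 - h201 - h120
  have hC : coeff (mm 0 2 1) H * b + coeff (mm 0 1 2) H * c = 0 := by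
    refine mulz (mul_ne_zero (three_ne_zero) hb0) ?_
    linear_combination E3 - 2*E1 + b*E2
  have h111 : coeff (mm 1 1 1) H = coeff (mm 0 1 2) H * c := by
    have h := mulz hb0 (show b * (coeff (mm 1 1 1) H - coeff (mm 0 1 2) H * c) = 0 by
      linear_combination 2*E1 - E3 + b*hC)
    linear_combination h
  have h102 : coeff (mm 1 0 2) H + coeff (mm 0 1 2) H * b = 0 := by
    refine mulz hc0 ?_
    linear_combination E1 - b*h111
  have h012 : coeff (mm 0 1 2) H = 0 := by
    refine mulz (mul_ne_zero hbc hb1) ?_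
    linear_combination -(b*E4) + b*h111 + b*h102 + hC
  have h021 : coeff (mm 0 2 1) H = 0 := by
    refine mulz hb0 ?_
    linear_combination hC - c*h012
  have h111z : coeff (mm 1 1 1) H = 0 := by linear_combination h111 + c*h012
  have h102z : coeff (mm 1 0 2) H = 0 := by linear_combination h102 - b*h012
  rw [hrep, h300, h210, h201, h120, h111z, h102z, h030, h021, h012, h003]
  simp

lemma coeff_Fc_210 (b c : ℂ) : coeff (mm 2 1 0) (Fc b c) = 0 := by
  simp [Fc, coeff_mono, mm_eq_mm]

lemma coeff_Fc_201 (b c : ℂ) : coeff (mm 2 0 1) (Fc b c) = b*(b-c) := by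
  simp [Fc, coeff_mono, mm_eq_mm]

lemma coeff_Gc_210 (a b c : ℂ) : coeff (mm 2 1 0) (Gc a b c) = -(a*c^2*(b-1)) := by
  simp [Gc, coeff_mono, mm_eq_mm]

lemma coeff_Gc_201 (a b c : ℂ) : coeff (mm 2 0 1) (Gc a b c) = -(a*b*c*(1-c)) := by
  simp [Gc, coeff_mono, mm_eq_mm]

lemma W5cond_sub (a b c : ℂ) (s t : ℂ) (H : MvPolynomial (Fin 3) ℂ)
    (hH : W5cond a b c 3 2 H) :
    W5cond a b c 3 2 (H - (s • Fc b c + t • Gc a b c)) := by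
  obtain ⟨h1, h2, h3, h4⟩ := hH
  refine ⟨?_, ?_, ?_, ?_⟩
  · refine h1.sub (IsHomogeneous.add ?_ ?_) <;> rw [smul_eq_C_mul]
    · exact ((Fc_cond a b c).1).C_mul s
    · exact ((Gc_cond a b c).1).C_mul t
  · intro z hz
    simp [smul_eq_C_mul, h2 z hz, (Fc_cond a b c).2.1 z hz, (Gc_cond a b c).2.1 z hz]
  · simp [smul_eq_C_mul, h3, (Fc_cond a b c).2.2.1, (Gc_cond a b c).2.2.1]
  · intro _ i
    simp [smul_eq_C_mul, pderiv_C_mul, h4 le_rfl i,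
      (Fc_cond a b c).2.2.2 le_rfl i, (Gc_cond a b c).2.2.2 le_rfl i]

/-- For generic parameters `a, b, c`, the scheme `W₅ + 2P` imposes independent
conditions: `m(1) = 0` (there is no nonzero conic through `W₅` and `P`) and
`m(2) = 2` (the space of cubics through `W₅` singular at `P` has dimension two). -/
theorem stmt10 (a b c : ℂ) (hgen : AlgebraicIndependent ℚ ![a, b, c])
    (ha0 : a ≠ 0) (ha1 : a ≠ 1) :
    (∀ F : MvPolynomial (Fin 3) ℂ, W5cond a b c 2 1 F → F = 0) ∧
    (∃ F G : MvPolynomial (Fin 3) ℂ, W5cond a b c 3 2 F ∧ W5cond a b c 3 2 G ∧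
      LinearIndependent ℂ ![F, G] ∧
      ∀ H : MvPolynomial (Fin 3) ℂ, W5cond a b c 3 2 H →
        H ∈ Submodule.span ℂ ({F, G} : Set (MvPolynomial (Fin 3) ℂ))) := by
  have inj := algebraicIndependent_iff_injective_aeval.mp hgen
  have key : ∀ p : MvPolynomial (Fin 3) ℚ, (aeval ![a, b, c]) p = 0 → p = 0 :=
    fun p hp => inj (by rw [hp, map_zero])
  have hb0 : b ≠ 0 := fun h => MvPolynomial.X_ne_zero 1 (key (X 1) (by simp [h]))
  have hc0 : c ≠ 0 := fun h => MvPolynomial.X_ne_zero 2 (key (X 2) (by simp [h]))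
  have hb1 : b - 1 ≠ 0 := by
    intro h
    have h0 := key (X 1 - 1) (by simpa using h)
    have h1 := congrArg (coeff (Finsupp.single 1 1)) h0
    simp [coeff_X, coeff_one, Finsupp.single_eq_zero, eq_comm] at h1
  have hbc : b - c ≠ 0 := by
    intro h
    have h0 := key (X 1 - X 2) (by simpa using h)
    have h1 := congrArg (coeff (Finsupp.single 1 1)) h0
    simp [coeff_X, coeff_X', Finsupp.single_eq_single_iff] at h1
  have hg1 : -(a*c^2*(b-1)) ≠ 0 := by
    simp only [neg_ne_zero]
    exact mul_ne_zero (mul_ne_zero ha0 (pow_ne_zero 2 hc0)) hb1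
  have hf2 : b*(b-c) ≠ 0 := mul_ne_zero hb0 hbc
  constructor
  · intro F hF
    exact conic_zero a b c ha0 hc0 hb1 F hF
  · refine ⟨Fc b c, Gc a b c, Fc_cond a b c, Gc_cond a b c, ?_, ?_⟩
    · rw [LinearIndependent.pair_iff]
      intro s t hst
      have h1 := congrArg (coeff (mm 2 1 0)) hst
      have h2 := congrArg (coeff (mm 2 0 1)) hst
      simp [coeff_Fc_210, coeff_Fc_201, coeff_Gc_210, coeff_Gc_201, coeff_smul] at h1 h2
      have ht : t = 0 := by
        rcases h1 with h | h | h
        · exact h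
        · rcases h with h | h
          · exact absurd h ha0
          · exact absurd h hc0
        · exact absurd h hb1
      subst ht
      simp at h2
      have hs : s = 0 := by
        rcases h2 with h | h | h
        · exact h
        · exact absurd h hb0
        · exact absurd h hbc
      exact ⟨hs, rfl⟩
    · intro H hH
      set u1 : ℂ := coeff (mm 2 1 0) H with hu1
      set u2 : ℂ := coeff (mm 2 0 1) H with hu2
      set t : ℂ := u1 / (-(a*c^2*(b-1))) with hts
      set s : ℂ := (u2 - t * (-(a*b*c*(1-c)))) / (b*(b-c)) with hss
      have hzero : H - (s • Fc b c + t • Gc a b c) = 0 := by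
        apply cubic_core a b c ha0 hb0 hc0 hb1 hbc _ (W5cond_sub a b c s t H hH)
        · simp only [coeff_sub, coeff_add, coeff_smul, smul_eq_mul, coeff_Fc_210, coeff_Gc_210]
          rw [hts]
          field_simp
          rw [hu1]; ring
        · simp only [coeff_sub, coeff_add, coeff_smul, smul_eq_mul, coeff_Fc_201, coeff_Gc_201]
          rw [hss]
          field_simp
          rw [hu2]; ring
      rw [Submodule.mem_span_pair]
      exact ⟨s, t, by linear_combination -hzero⟩

end
end
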